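/- arXiv:2006.08279 — 2 statements merged into one kernel-verified Lean document; each statement's English description precedes it below -/
import Mathlib

section
/- Let μ ∈ {0,1}. Then 𝒜⁺_μ = 𝒦⁺_μ and 𝒜⁻_μ = 𝒦⁻_μ, i.e. for every φ ∈ H¹(ℝ²)∖{0} with S_μ(φ) < S_μ(Q_μ), one has P_μ(φ) > 0 if and only if I_μ(φ) > 0 (and P_μ(φ) < 0 if and only if I_μ(φ) < 0). -/
open MeasureTheory Real Filter
open scoped Topology ENNReal

noncomputable section

abbrev E2 : Type := EuclideanSpace ℝ (Fin 2)

/-- Squared `L²` norm. -/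
def l2Sq (u : E2 → ℂ) : ℝ := ∫ x : E2, ‖u x‖ ^ 2

/-- Squared `L²` norm of the gradient. -/
def gradSq (u : E2 → ℂ) : ℝ := ∫ x : E2, ‖fderiv ℝ u x‖ ^ 2

/-- Membership in `H¹(ℝ²)`. -/
def MemH1 (u : E2 → ℂ) : Prop :=
  MemLp u 2 volume ∧ Differentiable ℝ u ∧ MemLp (fun x => fderiv ℝ u x) 2 volume

/-- Integrability of all exponentials `e^{a|u|²} - 1`. -/
def ExpIntegrable (u : E2 → ℂ) : Prop :=
  ∀ a : ℝ, 0 < a → Integrable (fun x : E2 => Real.exp (a * ‖u x‖ ^ 2) - 1)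

/-- The nonlinearity `f_μ`. -/
def fmu (μ : ℝ) (z : ℂ) : ℂ :=
  ((Real.exp (4 * π * ‖z‖ ^ 2) - 1 - 4 * π * μ * ‖z‖ ^ 2 : ℝ) : ℂ) * z

/-- The potential `F_μ`. -/
def Fmu (μ : ℝ) (z : ℂ) : ℝ :=
  (Real.exp (4 * π * ‖z‖ ^ 2) - 1 - 4 * π * ‖z‖ ^ 2 - 8 * π ^ 2 * μ * ‖z‖ ^ 4) / (8 * π)

/-- `Re (z̄ f_μ(z))`. -/
def nlDensity (μ : ℝ) (z : ℂ) : ℝ :=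
  (Real.exp (4 * π * ‖z‖ ^ 2) - 1 - 4 * π * μ * ‖z‖ ^ 2) * ‖z‖ ^ 2

/-- Energy. -/
def Emu (μ : ℝ) (u : E2 → ℂ) : ℝ := gradSq u / 2 - ∫ x : E2, Fmu μ (u x)

/-- Action. -/
def Smu (μ : ℝ) (u : E2 → ℂ) : ℝ := Emu μ u + l2Sq u / 2

/-- The functional `P_μ`. -/
def Pmu (μ : ℝ) (u : E2 → ℂ) : ℝ := l2Sq u / 2 - ∫ x : E2, Fmu μ (u x)

/-- The virial functional `I_μ`. -/
def Imu (μ : ℝ) (u : E2 → ℂ) : ℝ :=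
  gradSq u - ∫ x : E2, (nlDensity μ (u x) - 2 * Fmu μ (u x))

/-- Laplacian on `ℝ²` (sum of second directional derivatives). -/
def lap (v : E2 → ℂ) (x : E2) : ℂ :=
  ∑ i : Fin 2, fderiv ℝ (fun y => fderiv ℝ v y (EuclideanSpace.single i 1)) x
      (EuclideanSpace.single i 1)

/-- `φ` is a (pointwise) solution to the elliptic equation `-Δφ + φ = f_μ(φ)`. -/
def IsEllipticSolution (μ : ℝ) (φ : E2 → ℂ) : Prop :=
  ∀ x, -lap φ x + φ x = fmu μ (φ x)

/-- Ground state for `-ΔQ + Q = f_μ(Q)`. -/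
structure IsGroundState (μ : ℝ) (Q : E2 → ℂ) : Prop where
  mem : MemH1 Q
  expint : ExpIntegrable Q
  nonzero : ¬ Q =ᵐ[volume] (0 : E2 → ℂ)
  radial : ∀ x y : E2, ‖x‖ = ‖y‖ → Q x = Q y
  solves : IsEllipticSolution μ Q
  minimal : ∀ φ : E2 → ℂ, MemH1 φ → ExpIntegrable φ → ¬ φ =ᵐ[volume] (0 : E2 → ℂ) →
    IsEllipticSolution μ φ → Smu μ Q ≤ Smu μ φ
  grad_pos : 0 < gradSq Q
  grad_lt_one : gradSq Q < 1


open Real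

section CalcIneq

private lemma nonneg_of_deriv {f f' : ℝ → ℝ} (h0 : f 0 = 0)
    (hf : ∀ s, HasDerivAt f (f' s) s) (h' : ∀ s, 0 ≤ s → 0 ≤ f' s) :
    ∀ s, 0 ≤ s → 0 ≤ f s := by
  intro s hs
  have hd : Differentiable ℝ f := fun s => (hf s).differentiableAt
  have hmono : MonotoneOn f (Set.Ici (0:ℝ)) := by
    apply monotoneOn_of_deriv_nonneg (convex_Ici 0) hd.continuous.continuousOn
      hd.differentiableOn
    intro x hx
    rw [interior_Ici] at hx
    rw [(hf x).deriv]
    exact h' x (le_of_lt hx)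
  have := hmono (Set.mem_Ici.2 le_rfl) (Set.mem_Ici.2 hs) hs
  linarith [h0 ▸ this]

private lemma ineqP1 (s : ℝ) : 0 ≤ exp s - 1 - s := by
  nlinarith [Real.add_one_le_exp s]

private lemma ineqP2 : ∀ s : ℝ, 0 ≤ s → 0 ≤ exp s - 1 - s - s ^ 2 / 2 := by
  apply nonneg_of_deriv (f' := fun s => exp s - 1 - s)
  · norm_num
  · intro s
    have h := (((Real.hasDerivAt_exp s).sub_const 1).sub (hasDerivAt_id s)).sub
      ((hasDerivAt_pow 2 s).div_const 2)
    refine h.congr_deriv ?_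
    simp
    try ring
  · intro s _; nlinarith [Real.add_one_le_exp s]

private lemma ineqP3 : ∀ s : ℝ, 0 ≤ s → 0 ≤ exp s - 1 - s - s ^ 2 / 2 - s ^ 3 / 6 := by
  apply nonneg_of_deriv (f' := fun s => exp s - 1 - s - s ^ 2 / 2)
  · norm_num
  · intro s
    have h := ((((Real.hasDerivAt_exp s).sub_const 1).sub (hasDerivAt_id s)).sub
      ((hasDerivAt_pow 2 s).div_const 2)).sub ((hasDerivAt_pow 3 s).div_const 6)
    refine h.congr_deriv ?_
    simp
    try ring
  · exact ineqP2

/-- `(s-1)e^s + 1 - s²/2 ≥ 0` for `s ≥ 0`. -/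
private lemma ineqQ1 : ∀ s : ℝ, 0 ≤ s → 0 ≤ (s - 1) * exp s + 1 - s ^ 2 / 2 := by
  apply nonneg_of_deriv (f' := fun s => s * exp s - s)
  · norm_num
  · intro s
    have h := ((((hasDerivAt_id s).sub_const 1).mul (Real.hasDerivAt_exp s)).add_const 1).sub
      ((hasDerivAt_pow 2 s).div_const 2)
    refine h.congr_deriv ?_
    simp
    try ring
  · intro s hs
    have := ineqP1 s
    nlinarith

/-- `(s-1)e^s + 1 - s²/2 - s³/3 ≥ 0` for `s ≥ 0`. -/
private lemma ineqQ2 : ∀ s : ℝ, 0 ≤ s → 0 ≤ (s - 1) * exp s + 1 - s ^ 2 / 2 - s ^ 3 / 3 := by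
  apply nonneg_of_deriv (f' := fun s => s * exp s - s - s ^ 2)
  · norm_num
  · intro s
    have h := (((((hasDerivAt_id s).sub_const 1).mul (Real.hasDerivAt_exp s)).add_const 1).sub
      ((hasDerivAt_pow 2 s).div_const 2)).sub ((hasDerivAt_pow 3 s).div_const 3)
    refine h.congr_deriv ?_
    simp
    try ring
  · intro s hs
    have := ineqP2 s hs
    nlinarith

/-- `(s-2)e^s + s + 2 ≥ 0` for `s ≥ 0`. -/
private lemma ineqR : ∀ s : ℝ, 0 ≤ s → 0 ≤ (s - 2) * exp s + s + 2 := by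
  apply nonneg_of_deriv (f' := fun s => (s - 1) * exp s + 1)
  · norm_num
  · intro s
    have h := ((((hasDerivAt_id s).sub_const 2).mul (Real.hasDerivAt_exp s)).add
      (hasDerivAt_id s)).add_const 2
    refine h.congr_deriv ?_
    simp
    try ring
  · intro s hs
    have := ineqQ1 s hs
    nlinarith

/-- Upper bound `(s-1)e^s + 1 ≤ e^{2s} - 1` for `s ≥ 0`. -/
private lemma ineqU1 (s : ℝ) (hs : 0 ≤ s) : (s - 1) * exp s + 1 ≤ exp (2 * s) - 1 := by
  have h1 : (1:ℝ) ≤ exp s := Real.one_le_exp hs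
  have h2 : s ≤ exp s - 1 := by nlinarith [Real.add_one_le_exp s]
  have h3 : exp (2 * s) = exp s * exp s := by rw [two_mul, Real.exp_add]
  nlinarith

end CalcIneq

section Pointwise

private lemma F_eq (μ : ℝ) (z : ℂ) :
    Fmu μ z = (exp (4*π*‖z‖^2) - 1 - (4*π*‖z‖^2) - μ*(4*π*‖z‖^2)^2/2) / (8*π) := by
  unfold Fmu
  congr 1
  ring

private lemma G_eq (μ : ℝ) (z : ℂ) :
    nlDensity μ z - 2 * Fmu μ z =
      ((4*π*‖z‖^2 - 1) * exp (4*π*‖z‖^2) + 1 - μ*(4*π*‖z‖^2)^2/2) / (4*π) := by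
  have hπ := Real.pi_pos
  unfold nlDensity Fmu
  field_simp
  ring

private lemma s_nonneg (z : ℂ) : 0 ≤ 4*π*‖z‖^2 := by positivity

private lemma F_nonneg (hμ : μ = 0 ∨ μ = 1) (z : ℂ) : 0 ≤ Fmu μ z := by
  have hπ := Real.pi_pos
  have hs := s_nonneg z
  rw [F_eq]
  apply div_nonneg _ (by positivity)
  rcases hμ with h | h <;> subst h
  · have := ineqP1 (4*π*‖z‖^2); nlinarith
  · have := ineqP2 (4*π*‖z‖^2) hs; nlinarith

private lemma F_le (hμ : μ = 0 ∨ μ = 1) (z : ℂ) :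
    Fmu μ z ≤ (exp (4*π*‖z‖^2) - 1) / (8*π) := by
  have hπ := Real.pi_pos
  have hs := s_nonneg z
  have hμ' : 0 ≤ μ := by rcases hμ with h|h <;> simp [h]
  rw [F_eq, div_le_div_iff₀ (by positivity) (by positivity)]
  have h1 : (0:ℝ) ≤ (4*π*‖z‖^2) * (8*π) := by positivity
  have h2 : (0:ℝ) ≤ (μ*(4*π*‖z‖^2)^2/2) * (8*π) := by positivity
  nlinarith

private lemma G_nonneg (hμ : μ = 0 ∨ μ = 1) (z : ℂ) :
    0 ≤ nlDensity μ z - 2 * Fmu μ z := by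
  have hπ := Real.pi_pos
  have hs := s_nonneg z
  rw [G_eq]
  apply div_nonneg _ (by positivity)
  rcases hμ with h | h <;> subst h
  · have := ineqQ1 (4*π*‖z‖^2) hs; nlinarith
  · have := ineqQ1 (4*π*‖z‖^2) hs; nlinarith

private lemma G_le (hμ : μ = 0 ∨ μ = 1) (z : ℂ) :
    nlDensity μ z - 2 * Fmu μ z ≤ (exp (8*π*‖z‖^2) - 1) / (4*π) := by
  have hπ := Real.pi_pos
  have hs := s_nonneg z
  rw [G_eq]
  have h8 : exp (8*π*‖z‖^2) = exp (2*(4*π*‖z‖^2)) := by ring_nf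
  rw [h8]
  have hU := ineqU1 (4*π*‖z‖^2) hs
  have hμ' : 0 ≤ μ := by rcases hμ with h|h <;> simp [h]
  rw [div_le_div_iff₀ (by positivity) (by positivity)]
  have h1 := mul_le_mul_of_nonneg_right hU (by positivity : (0:ℝ) ≤ 4*π)
  have h2 : (0:ℝ) ≤ (μ*(4*π*‖z‖^2)^2/2) * (4*π) := by positivity
  nlinarith

private lemma FG_le (hμ : μ = 0 ∨ μ = 1) (z : ℂ) :
    2 * Fmu μ z ≤ nlDensity μ z - 2 * Fmu μ z := by
  have hπ := Real.pi_pos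
  have hs := s_nonneg z
  have hR := ineqR (4*π*‖z‖^2) hs
  rw [G_eq, F_eq]
  have h2 : ∀ N : ℝ, 2*(N/(8*π)) = N/(4*π) := fun N => by
    field_simp
    ring
  rw [h2, div_le_div_iff₀ (by positivity) (by positivity)]
  nlinarith [Real.exp_pos (4*π*‖z‖^2)]

private lemma G_lower (hμ : μ = 0 ∨ μ = 1) (z : ℂ) :
    (if μ = 0 then 2*π*(‖z‖^2)^2 else (16*π^2/3)*(‖z‖^2)^3)
      ≤ nlDensity μ z - 2 * Fmu μ z := by
  have hπ := Real.pi_pos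
  have hs := s_nonneg z
  rw [G_eq]
  rcases hμ with h | h <;> subst h <;> simp only [if_true, if_false, one_ne_zero, reduceIte]
  · rw [le_div_iff₀ (by positivity)]
    have := ineqQ1 (4*π*‖z‖^2) hs
    nlinarith
  · rw [le_div_iff₀ (by positivity)]
    have := ineqQ2 (4*π*‖z‖^2) hs
    nlinarith

private lemma F_lower (hμ : μ = 0 ∨ μ = 1) (z : ℂ) :
    (if μ = 0 then π*(‖z‖^2)^2 else (4*π^2/3)*(‖z‖^2)^3) ≤ Fmu μ z := by
  have hπ := Real.pi_pos
  have hs := s_nonneg z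
  rw [F_eq]
  rcases hμ with h | h <;> subst h <;> simp only [if_true, if_false, one_ne_zero, reduceIte]
  · rw [le_div_iff₀ (by positivity)]
    have := ineqP2 (4*π*‖z‖^2) hs
    nlinarith
  · rw [le_div_iff₀ (by positivity)]
    have := ineqP3 (4*π*‖z‖^2) hs
    nlinarith

private lemma norm_sq_smul (l : ℝ) (z : ℂ) : ‖l • z‖^2 = l^2 * ‖z‖^2 := by
  rw [norm_smul]
  simp [Real.norm_eq_abs, mul_pow, sq_abs]

end Pointwise

section Kit

variable {u φ : E2 → ℂ} {μ : ℝ}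

private lemma cont_F (μ : ℝ) : Continuous fun z : ℂ => Fmu μ z := by
  unfold Fmu; fun_prop

private lemma cont_G (μ : ℝ) : Continuous fun z : ℂ => nlDensity μ z - 2 * Fmu μ z := by
  unfold nlDensity Fmu; fun_prop

private lemma aesm_F (hm : AEStronglyMeasurable u volume) :
    AEStronglyMeasurable (fun x => Fmu μ (u x)) volume :=
  (cont_F μ).comp_aestronglyMeasurable hm

private lemma aesm_G (hm : AEStronglyMeasurable u volume) :
    AEStronglyMeasurable (fun x => nlDensity μ (u x) - 2 * Fmu μ (u x)) volume :=
  (cont_G μ).comp_aestronglyMeasurable hm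

private lemma integrable_F (hμ : μ = 0 ∨ μ = 1) (hm : AEStronglyMeasurable u volume)
    (hexp : ExpIntegrable u) : Integrable (fun x => Fmu μ (u x)) := by
  have hπ := Real.pi_pos
  apply Integrable.mono' ((hexp (4*π) (by positivity)).div_const (8*π)) (aesm_F hm)
  refine Filter.Eventually.of_forall fun x => ?_
  rw [Real.norm_eq_abs, abs_of_nonneg (F_nonneg hμ _)]
  exact F_le hμ _

private lemma integrable_G (hμ : μ = 0 ∨ μ = 1) (hm : AEStronglyMeasurable u volume)
    (hexp : ExpIntegrable u) :
    Integrable (fun x => nlDensity μ (u x) - 2 * Fmu μ (u x)) := by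
  have hπ := Real.pi_pos
  apply Integrable.mono' ((hexp (8*π) (by positivity)).div_const (4*π)) (aesm_G hm)
  refine Filter.Eventually.of_forall fun x => ?_
  rw [Real.norm_eq_abs, abs_of_nonneg (G_nonneg hμ _)]
  exact G_le hμ _

private lemma integrable_tk (hm : AEStronglyMeasurable u volume) (hexp : ExpIntegrable u)
    {k : ℕ} (hk : k = 2 ∨ k = 3) : Integrable (fun x => (‖u x‖^2)^k) := by
  have hb : ∀ t : ℝ, 0 ≤ t → t^k ≤ 6 * (Real.exp (1 * t) - 1) := by
    intro t ht
    rcases hk with h | h <;> subst h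
    · have := ineqP2 t ht
      have h1 : t ≤ Real.exp t - 1 := by nlinarith [Real.add_one_le_exp t]
      rw [one_mul]; nlinarith
    · have := ineqP3 t ht
      rw [one_mul]; nlinarith
  apply Integrable.mono' ((hexp 1 one_pos).const_mul 6)
    (((continuous_pow k).comp ((continuous_pow 2).comp continuous_norm)).comp_aestronglyMeasurable hm)
  refine Filter.Eventually.of_forall fun x => ?_
  have ht : (0:ℝ) ≤ ‖u x‖^2 := sq_nonneg _
  simp only [Function.comp_apply]
  rw [Real.norm_eq_abs, abs_of_nonneg (pow_nonneg ht k)]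
  exact hb _ ht

private lemma integral_tk_pos (hm : AEStronglyMeasurable u volume) (hexp : ExpIntegrable u)
    (hne : ¬ u =ᵐ[volume] (0 : E2 → ℂ)) {k : ℕ} (hk : k = 2 ∨ k = 3) :
    0 < ∫ x, (‖u x‖^2)^k := by
  rcases lt_or_eq_of_le (integral_nonneg (f := fun x => (‖u x‖^2)^k) (fun x => pow_nonneg (sq_nonneg _) k)) with h | h
  · exact h
  · exfalso
    apply hne
    have h0 := (integral_eq_zero_iff_of_nonneg
      (fun x => pow_nonneg (sq_nonneg _) k) (integrable_tk hm hexp hk)).1 h.symm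
    refine h0.mono fun x hx => ?_
    have hk1 : k ≠ 0 := by rcases hk with h|h <;> simp [h]
    simpa [pow_eq_zero_iff, hk1, norm_eq_zero] using hx

private lemma l2_pos (h2 : MemLp u 2 volume) (hne : ¬ u =ᵐ[volume] (0 : E2 → ℂ)) :
    0 < l2Sq u := by
  have hm := h2.aestronglyMeasurable
  have hi : Integrable (fun x => ‖u x‖^2) := (memLp_two_iff_integrable_sq_norm hm).1 h2
  rcases lt_or_eq_of_le (integral_nonneg (f := fun x => ‖u x‖^2) (fun x => sq_nonneg (‖u x‖))) with h | h
  · exact h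
  · exfalso
    apply hne
    have h0 := (integral_eq_zero_iff_of_nonneg (fun x => sq_nonneg (‖u x‖)) hi).1 h.symm
    exact h0.mono fun x hx => by simpa [norm_eq_zero] using hx

private lemma gradSq_nonneg (u : E2 → ℂ) : 0 ≤ gradSq u :=
  integral_nonneg fun x => sq_nonneg _

private lemma Smu_eq (μ : ℝ) (u : E2 → ℂ) : Smu μ u = gradSq u / 2 + Pmu μ u := by
  unfold Smu Emu Pmu; ring

end Kit

section Scaling

variable {u φ : E2 → ℂ} {μ : ℝ}

private lemma l2_smul (u : E2 → ℂ) (l : ℝ) : l2Sq (fun x => l • u x) = l^2 * l2Sq u := by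
  unfold l2Sq
  simp_rw [norm_sq_smul]
  exact integral_const_mul _ _

private lemma grad_smul (hd : Differentiable ℝ u) (l : ℝ) :
    gradSq (fun x => l • u x) = l^2 * gradSq u := by
  unfold gradSq
  have h : (fun x => ‖fderiv ℝ (fun x => l • u x) x‖ ^ 2)
      = fun x : E2 => l^2 * ‖fderiv ℝ u x‖^2 := by
    funext x
    rw [fderiv_fun_const_smul (hd x) l, norm_smul l (fderiv ℝ u x)]
    simp [Real.norm_eq_abs, mul_pow, sq_abs]
  rw [h]
  exact integral_const_mul _ _

private lemma memH1_smul (h : MemH1 u) (l : ℝ) : MemH1 (fun x => l • u x) := by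
  obtain ⟨h2, hd, hf⟩ := h
  refine ⟨h2.const_smul l, hd.const_smul l, ?_⟩
  have heq : (fun x => fderiv ℝ (fun y => l • u y) x) = fun x => l • fderiv ℝ u x :=
    funext fun x => fderiv_fun_const_smul (hd x) l
  rw [heq]
  exact hf.const_smul l

private lemma expint_smul (hexp : ExpIntegrable u) (l : ℝ) :
    ExpIntegrable (fun x => l • u x) := by
  intro a ha
  rcases eq_or_ne l 0 with rfl | hl
  · have heq : (fun x : E2 => Real.exp (a * ‖(0:ℝ) • u x‖^2) - 1) = fun _ => 0 := by
      funext x; simp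
    rw [heq]
    exact integrable_zero _ _ _
  · have := hexp (a * l^2) (by positivity)
    have heq : (fun x : E2 => Real.exp (a * ‖l • u x‖^2) - 1)
        = fun x => Real.exp ((a * l^2) * ‖u x‖^2) - 1 := by
      funext x; rw [norm_sq_smul]; ring_nf
    rw [heq]
    exact this

private lemma nonzero_smul (hne : ¬ u =ᵐ[volume] (0 : E2 → ℂ)) {l : ℝ} (hl : l ≠ 0) :
    ¬ (fun x => l • u x) =ᵐ[volume] (0 : E2 → ℂ) := by
  intro h
  exact hne (h.mono fun x hx => by simpa [smul_eq_zero, hl] using hx)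

end Scaling

section Dilation

variable {φ : E2 → ℂ} {μ : ℝ}

private lemma integral_dilate (g : E2 → ℝ) {θ : ℝ} (hθ : 0 < θ) :
    ∫ x : E2, g (θ⁻¹ • x) = θ^2 * ∫ x, g x := by
  have h := MeasureTheory.Measure.integral_comp_inv_smul_of_nonneg (volume : Measure E2) g hθ.le
  rw [show Module.finrank ℝ E2 = 2 from finrank_euclideanSpace_fin] at h
  simpa [smul_eq_mul] using h

private lemma fderiv_dilate (hd : Differentiable ℝ φ) (θ : ℝ) (x : E2) :
    fderiv ℝ (fun y : E2 => φ (θ⁻¹ • y)) x = θ⁻¹ • fderiv ℝ φ (θ⁻¹ • x) := by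
  have h1 : HasFDerivAt (fun y : E2 => θ⁻¹ • y)
      ((θ⁻¹ : ℝ) • ContinuousLinearMap.id ℝ E2) x := (hasFDerivAt_id x).const_smul θ⁻¹
  have h3 := ((hd (θ⁻¹ • x)).hasFDerivAt).comp x h1
  have h4 : (fderiv ℝ φ (θ⁻¹ • x)).comp ((θ⁻¹ : ℝ) • ContinuousLinearMap.id ℝ E2)
      = θ⁻¹ • fderiv ℝ φ (θ⁻¹ • x) := by
    ext v
    simp
  rw [← h4]
  exact h3.fderiv

private lemma qmp_inv_smul {θ : ℝ} (hθ : 0 < θ) :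
    MeasureTheory.Measure.QuasiMeasurePreserving (fun x : E2 => θ⁻¹ • x) volume volume :=
  MeasureTheory.Measure.quasiMeasurePreserving_smul (volume : Measure E2) (inv_ne_zero hθ.ne')

private lemma grad_dilate (hd : Differentiable ℝ φ) {θ : ℝ} (hθ : 0 < θ) :
    gradSq (fun x => φ (θ⁻¹ • x)) = gradSq φ := by
  unfold gradSq
  have h1 : ∀ x : E2, ‖fderiv ℝ (fun y => φ (θ⁻¹ • y)) x‖^2
      = (θ⁻¹)^2 * ((fun y => ‖fderiv ℝ φ y‖^2) (θ⁻¹ • x)) := by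
    intro x
    rw [fderiv_dilate hd θ x, norm_smul θ⁻¹ (fderiv ℝ φ (θ⁻¹ • x))]
    simp [Real.norm_eq_abs, mul_pow, sq_abs]
  simp_rw [h1]
  rw [integral_const_mul, integral_dilate (fun y => ‖fderiv ℝ φ y‖^2) hθ]
  field_simp

private lemma memH1_dilate (h : MemH1 φ) {θ : ℝ} (hθ : 0 < θ) :
    MemH1 (fun x => φ (θ⁻¹ • x)) := by
  obtain ⟨h2, hd, hf⟩ := h
  have hR : (θ⁻¹ : ℝ) ≠ 0 := inv_ne_zero hθ.ne'
  have aesmψ : AEStronglyMeasurable (fun x : E2 => φ (θ⁻¹ • x)) volume :=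
    h2.aestronglyMeasurable.comp_quasiMeasurePreserving (qmp_inv_smul hθ)
  refine ⟨?_, hd.comp (differentiable_id.const_smul θ⁻¹), ?_⟩
  · exact (memLp_two_iff_integrable_sq_norm aesmψ).2
      (Integrable.comp_smul ((memLp_two_iff_integrable_sq_norm h2.aestronglyMeasurable).1 h2) hR)
  · have heq : (fun x => fderiv ℝ (fun y => φ (θ⁻¹ • y)) x)
        = fun x => θ⁻¹ • fderiv ℝ φ (θ⁻¹ • x) := funext (fderiv_dilate hd θ)
    rw [heq]
    have aesm2 : AEStronglyMeasurable (fun x : E2 => fderiv ℝ φ (θ⁻¹ • x)) volume :=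
      hf.aestronglyMeasurable.comp_quasiMeasurePreserving (qmp_inv_smul hθ)
    have mem2 : MemLp (fun x : E2 => fderiv ℝ φ (θ⁻¹ • x)) 2 volume :=
      (memLp_two_iff_integrable_sq_norm aesm2).2
        (Integrable.comp_smul ((memLp_two_iff_integrable_sq_norm hf.aestronglyMeasurable).1 hf) hR)
    exact mem2.const_smul θ⁻¹

private lemma expint_dilate (hexp : ExpIntegrable φ) {θ : ℝ} (hθ : 0 < θ) :
    ExpIntegrable (fun x => φ (θ⁻¹ • x)) := fun a ha =>
  Integrable.comp_smul (f := fun y => Real.exp (a * ‖φ y‖^2) - 1) (hexp a ha)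
    (inv_ne_zero hθ.ne')

private lemma l2_dilate (φ : E2 → ℂ) {θ : ℝ} (hθ : 0 < θ) :
    l2Sq (fun x => φ (θ⁻¹ • x)) = θ^2 * l2Sq φ :=
  integral_dilate (fun y => ‖φ y‖^2) hθ

private lemma nonzero_dilate (h2 : MemLp φ 2 volume) (hne : ¬ φ =ᵐ[volume] (0 : E2 → ℂ))
    {θ : ℝ} (hθ : 0 < θ) : ¬ (fun x => φ (θ⁻¹ • x)) =ᵐ[volume] (0 : E2 → ℂ) := by
  intro h
  have h0 : l2Sq (fun x => φ (θ⁻¹ • x)) = 0 := by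
    unfold l2Sq
    have hae : (fun x : E2 => ‖φ (θ⁻¹ • x)‖^2) =ᵐ[volume] fun _ => (0:ℝ) :=
      h.mono fun x hx => by
        simp only [Pi.zero_apply] at hx
        simp [hx]
    rw [integral_congr_ae hae]
    simp
  rw [l2_dilate φ hθ] at h0
  have h1 := l2_pos h2 hne
  have h2' : (0:ℝ) < θ^2 := by positivity
  nlinarith

end Dilation

section MainLemmas

private lemma SQ_pos (μ : ℝ) (hμ : μ = 0 ∨ μ = 1) {SQ : ℝ}
    (hmem : ∃ ψ : E2 → ℂ, MemH1 ψ ∧ ExpIntegrable ψ ∧ ¬ ψ =ᵐ[volume] (0 : E2 → ℂ) ∧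
      Imu μ ψ = 0 ∧ SQ = Smu μ ψ) : 0 < SQ := by
  obtain ⟨ψ, hψ1, hψe, hψ0, hψI, hψS⟩ := hmem
  have hm := hψ1.1.aestronglyMeasurable
  have hF := integrable_F hμ hm hψe
  have hG := integrable_G hμ hm hψe
  have hl2 := l2_pos hψ1.1 hψ0
  have hIg : gradSq ψ = ∫ x, (nlDensity μ (ψ x) - 2 * Fmu μ (ψ x)) := by
    unfold Imu at hψI; linarith
  have hsplit : (∫ x, (nlDensity μ (ψ x) - 2 * Fmu μ (ψ x))) - 2 * ∫ x, Fmu μ (ψ x)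
      = ∫ x, ((nlDensity μ (ψ x) - 2 * Fmu μ (ψ x)) - 2 * Fmu μ (ψ x)) := by
    rw [integral_sub hG (hF.const_mul 2), integral_const_mul]
  have hnn : 0 ≤ ∫ x, ((nlDensity μ (ψ x) - 2 * Fmu μ (ψ x)) - 2 * Fmu μ (ψ x)) :=
    integral_nonneg fun x => by have := FG_le hμ (ψ x); simp only [Pi.zero_apply]; linarith
  rw [hψS, Smu_eq]
  unfold Pmu l2Sq
  unfold l2Sq at hl2
  linarith [hIg, hsplit, hnn]

private lemma dilation_absurd (μ : ℝ) (hμ : μ = 0 ∨ μ = 1) {SQ : ℝ}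
    (hlb : ∀ ψ : E2 → ℂ, MemH1 ψ → ExpIntegrable ψ → ¬ ψ =ᵐ[volume] (0 : E2 → ℂ) →
      Imu μ ψ = 0 → SQ ≤ Smu μ ψ)
    (φ : E2 → ℂ) (hφ1 : MemH1 φ) (hφe : ExpIntegrable φ)
    (hφ0 : ¬ φ =ᵐ[volume] (0 : E2 → ℂ)) (hSφ : Smu μ φ < SQ)
    (hgrad : 0 < gradSq φ)
    (hC : 0 < ∫ x, (nlDensity μ (φ x) - 2 * Fmu μ (φ x)))
    (hPθ : (gradSq φ / ∫ x, (nlDensity μ (φ x) - 2 * Fmu μ (φ x))) * Pmu μ φ < Pmu μ φ) :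
    False := by
  set C := ∫ x, (nlDensity μ (φ x) - 2 * Fmu μ (φ x)) with hCdef
  set θ := Real.sqrt (gradSq φ / C) with hθdef
  have hθpos : 0 < θ := Real.sqrt_pos.2 (by positivity)
  have hθsq : θ^2 = gradSq φ / C := Real.sq_sqrt (by positivity)
  have hψ1 := memH1_dilate hφ1 hθpos
  have hψe := expint_dilate hφe hθpos
  have hψ0 := nonzero_dilate hφ1.1 hφ0 hθpos
  have hgradψ : gradSq (fun x => φ (θ⁻¹ • x)) = gradSq φ := grad_dilate hφ1.2.1 hθpos
  have hGψ : (∫ x, (nlDensity μ (φ (θ⁻¹ • x)) - 2 * Fmu μ (φ (θ⁻¹ • x)))) = θ^2 * C :=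
    integral_dilate (fun y => nlDensity μ (φ y) - 2 * Fmu μ (φ y)) hθpos
  have hFψ : (∫ x, Fmu μ (φ (θ⁻¹ • x))) = θ^2 * ∫ x, Fmu μ (φ x) :=
    integral_dilate (fun y => Fmu μ (φ y)) hθpos
  have hl2ψ : l2Sq (fun x => φ (θ⁻¹ • x)) = θ^2 * l2Sq φ := l2_dilate φ hθpos
  have hIψ : Imu μ (fun x => φ (θ⁻¹ • x)) = 0 := by
    unfold Imu
    rw [hgradψ, hGψ, hθsq]
    field_simp
    ring
  have hSψ : Smu μ (fun x => φ (θ⁻¹ • x)) = gradSq φ / 2 + θ^2 * Pmu μ φ := by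
    rw [Smu_eq]
    unfold Pmu
    rw [hgradψ, hFψ, hl2ψ]
    ring
  have hfin := hlb _ hψ1 hψe hψ0 hIψ
  rw [hSψ, hθsq] at hfin
  have hS2 : Smu μ φ = gradSq φ / 2 + Pmu μ φ := Smu_eq μ φ
  linarith

private lemma exists_smul_P_zero (μ : ℝ) (hμ : μ = 0 ∨ μ = 1) (φ : E2 → ℂ)
    (hφ1 : MemH1 φ) (hφe : ExpIntegrable φ) (hφ0 : ¬ φ =ᵐ[volume] (0 : E2 → ℂ))
    (hP : 0 < Pmu μ φ) :
    ∃ lam : ℝ, 1 ≤ lam ∧ Pmu μ (fun x => lam • φ x) = 0 := by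
  have hπ := Real.pi_pos
  have hm := hφ1.1.aestronglyMeasurable
  set h : ℝ → ℝ := fun lam => ∫ x, Fmu μ (lam • φ x) with hdef
  set p : ℝ → ℝ := fun lam => lam^2 * l2Sq φ / 2 - h lam with hpdef
  have hch : Continuous h := by
    rw [continuous_iff_continuousAt]
    intro lam0
    apply MeasureTheory.continuousAt_of_dominated
      (bound := fun x => (Real.exp ((4*π*(|lam0|+1)^2) * ‖φ x‖^2) - 1)/(8*π))
    · exact Filter.Eventually.of_forall fun lam => aesm_F (hm.const_smul lam)
    · have hev : ∀ᶠ lam : ℝ in nhds lam0, |lam| ≤ |lam0| + 1 := by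
        filter_upwards [Metric.ball_mem_nhds lam0 one_pos] with lam hl
        rw [Metric.mem_ball, Real.dist_eq] at hl
        have := abs_sub_abs_le_abs_sub lam lam0
        linarith
      filter_upwards [hev] with lam hl
      refine Filter.Eventually.of_forall fun x => ?_
      rw [Real.norm_eq_abs, abs_of_nonneg (F_nonneg hμ _)]
      refine (F_le hμ _).trans ?_
      have ht : (0:ℝ) ≤ ‖φ x‖^2 := sq_nonneg _
      have hl2 : lam^2 ≤ (|lam0|+1)^2 := by
        rw [← sq_abs lam]
        have h0 : (0:ℝ) ≤ |lam| := abs_nonneg _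
        nlinarith
      have harg : 4*π*‖lam • φ x‖^2 ≤ (4*π*(|lam0|+1)^2) * ‖φ x‖^2 := by
        rw [norm_sq_smul]
        have h5 : lam^2*‖φ x‖^2 ≤ (|lam0|+1)^2*‖φ x‖^2 := mul_le_mul_of_nonneg_right hl2 ht
        nlinarith [mul_le_mul_of_nonneg_left h5 (by positivity : (0:ℝ) ≤ 4*π)]
      have hee := Real.exp_le_exp.2 harg
      gcongr
    · exact (hφe _ (by positivity)).div_const _
    · refine Filter.Eventually.of_forall fun x => ?_
      exact ((cont_F μ).comp (continuous_id.smul continuous_const)).continuousAt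
  have hcont : Continuous p := (((continuous_pow 2).mul continuous_const).div_const 2).sub hch
  have hp1 : p 1 = Pmu μ φ := by
    rw [hpdef]
    simp only [hdef, one_pow, one_smul]
    unfold Pmu
    ring
  obtain ⟨c, hc, k, hk, hlow⟩ : ∃ c : ℝ, 0 < c ∧ ∃ k : ℕ, (k = 2 ∨ k = 3) ∧
      ∀ lam : ℝ, 1 ≤ lam → ∀ x, c * lam^4 * (‖φ x‖^2)^k ≤ Fmu μ (lam • φ x) := by
    rcases hμ with h0 | h1
    · subst h0
      refine ⟨π, hπ, 2, Or.inl rfl, fun lam hlam x => ?_⟩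
      have hF := F_lower (Or.inl rfl) (lam • φ x)
      rw [if_pos rfl, norm_sq_smul] at hF
      calc π * lam^4 * (‖φ x‖^2)^2 = π * (lam^2 * ‖φ x‖^2)^2 := by ring
        _ ≤ _ := hF
    · subst h1
      refine ⟨4*π^2/3, by positivity, 3, Or.inr rfl, fun lam hlam x => ?_⟩
      have hF := F_lower (Or.inr rfl) (lam • φ x)
      rw [if_neg one_ne_zero, norm_sq_smul] at hF
      have ht : (0:ℝ) ≤ ‖φ x‖^2 := sq_nonneg _
      have hkey : lam^4 * (‖φ x‖^2)^3 ≤ lam^6 * (‖φ x‖^2)^3 := by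
        have h2 : (0:ℝ) ≤ lam^2 - 1 := by nlinarith
        have h3 : (0:ℝ) ≤ lam^4 := by positivity
        nlinarith [mul_nonneg (mul_nonneg h3 h2) (pow_nonneg ht 3)]
      have heq : (4*π^2/3) * (lam^2 * ‖φ x‖^2)^3 = (4*π^2/3) * (lam^6 * (‖φ x‖^2)^3) := by ring
      rw [heq] at hF
      nlinarith
  have hmpos : 0 < ∫ x, (‖φ x‖^2)^k := integral_tk_pos hm hφe hφ0 hk
  set m := ∫ x, (‖φ x‖^2)^k with hmdef
  set L := 1 + Real.sqrt (l2Sq φ / (2*c*m)) with hLdef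
  have hsq0 : 0 ≤ Real.sqrt (l2Sq φ / (2*c*m)) := Real.sqrt_nonneg _
  have hL1 : 1 ≤ L := by rw [hLdef]; linarith
  have hLpos : 0 < L := lt_of_lt_of_le one_pos hL1
  have hL2 : l2Sq φ / (2*c*m) < L^2 := by
    have hX : 0 ≤ l2Sq φ / (2*c*m) := by
      have := l2_pos hφ1.1 hφ0
      positivity
    have h1 : Real.sqrt (l2Sq φ / (2*c*m)) < L := by rw [hLdef]; linarith
    calc l2Sq φ / (2*c*m) = Real.sqrt (l2Sq φ / (2*c*m))^2 := (Real.sq_sqrt hX).symm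
      _ < L^2 := by nlinarith
  have hint1 : Integrable (fun x => Fmu μ (L • φ x)) :=
    integrable_F hμ (hm.const_smul L) (expint_smul hφe L)
  have hint2 : Integrable (fun x => c * L^4 * (‖φ x‖^2)^k) :=
    (integrable_tk hm hφe hk).const_mul _
  have hhL : c * L^4 * m ≤ h L := by
    have := integral_mono hint2 hint1 (fun x => hlow L hL1 x)
    rwa [integral_const_mul] at this
  have hcm : l2Sq φ < 2*c*m*L^2 := by
    have hpos : 0 < 2*c*m := by positivity
    calc l2Sq φ = (l2Sq φ / (2*c*m)) * (2*c*m) := by field_simp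
      _ < L^2 * (2*c*m) := by
        apply mul_lt_mul_of_pos_right hL2 hpos
      _ = 2*c*m*L^2 := by ring
  clear_value h p m L
  have hpL : p L < 0 := by
    have hL2pos : (0:ℝ) < L^2 := pow_pos hLpos 2
    have hprod : l2Sq φ * L^2 < 2*c*m*L^2*L^2 := mul_lt_mul_of_pos_right hcm hL2pos
    have hgoal : L^2 * l2Sq φ / 2 - h L < 0 := by nlinarith [hprod, hhL]
    rw [hpdef]
    simpa using hgoal
  have h01 : (0:ℝ) ∈ Set.Icc (p L) (p 1) := ⟨hpL.le, by rw [hp1]; exact hP.le⟩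
  obtain ⟨lam, hlam, hplam⟩ := intermediate_value_Icc' hL1 hcont.continuousOn h01
  refine ⟨lam, hlam.1, ?_⟩
  have hPeq : Pmu μ (fun x => lam • φ x) = p lam := by
    rw [hpdef, hdef]
    unfold Pmu
    rw [l2_smul]
  rw [hPeq]
  exact hplam

end MainLemmas
/-- equivalence of the invariant sets, `𝒜^±_μ = 𝒦^±_μ`: below the ground
state action level, `P_μ(φ) > 0 ↔ I_μ(φ) > 0` and `P_μ(φ) < 0 ↔ I_μ(φ) < 0`. -/
theorem Aplus_eq_Kplus (μ : ℝ) (hμ : μ = 0 ∨ μ = 1)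
    (Q : E2 → ℂ) (hQ : IsGroundState μ Q)
    (hPchar : IsLeast {s : ℝ | ∃ ψ : E2 → ℂ, MemH1 ψ ∧ ExpIntegrable ψ ∧
        ¬ ψ =ᵐ[volume] (0 : E2 → ℂ) ∧ Pmu μ ψ = 0 ∧ s = Smu μ ψ} (Smu μ Q))
    (hIchar : IsLeast {s : ℝ | ∃ ψ : E2 → ℂ, MemH1 ψ ∧ ExpIntegrable ψ ∧
        ¬ ψ =ᵐ[volume] (0 : E2 → ℂ) ∧ Imu μ ψ = 0 ∧ s = Smu μ ψ} (Smu μ Q)) :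
    ∀ φ : E2 → ℂ, MemH1 φ → ExpIntegrable φ → ¬ φ =ᵐ[volume] (0 : E2 → ℂ) →
      Smu μ φ < Smu μ Q →
        ((0 < Pmu μ φ ↔ 0 < Imu μ φ) ∧ (Pmu μ φ < 0 ↔ Imu μ φ < 0)) := by
  intro φ hφ1 hφe hφ0 hS
  have hπ := Real.pi_pos
  have hm := hφ1.1.aestronglyMeasurable
  have hPne : Pmu μ φ ≠ 0 := fun h =>
    absurd (hPchar.2 ⟨φ, hφ1, hφe, hφ0, h, rfl⟩) (not_le.2 hS)
  have hIne : Imu μ φ ≠ 0 := fun h =>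
    absurd (hIchar.2 ⟨φ, hφ1, hφe, hφ0, h, rfl⟩) (not_le.2 hS)
  have hlbI : ∀ ψ : E2 → ℂ, MemH1 ψ → ExpIntegrable ψ → ¬ ψ =ᵐ[volume] (0 : E2 → ℂ) →
      Imu μ ψ = 0 → Smu μ Q ≤ Smu μ ψ :=
    fun ψ a b c d => hIchar.2 ⟨ψ, a, b, c, d, rfl⟩
  -- positivity of C = ∫ (nl - 2F)
  have hCpos : 0 < ∫ x, (nlDensity μ (φ x) - 2 * Fmu μ (φ x)) := by
    obtain ⟨c, hc, k, hk, hlow⟩ : ∃ c : ℝ, 0 < c ∧ ∃ k : ℕ, (k = 2 ∨ k = 3) ∧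
        ∀ x, c * (‖φ x‖^2)^k ≤ nlDensity μ (φ x) - 2 * Fmu μ (φ x) := by
      rcases hμ with h0 | h1
      · subst h0
        refine ⟨2*π, by positivity, 2, Or.inl rfl, fun x => ?_⟩
        have hG := G_lower (Or.inl rfl) (φ x)
        rwa [if_pos rfl] at hG
      · subst h1
        refine ⟨16*π^2/3, by positivity, 3, Or.inr rfl, fun x => ?_⟩
        have hG := G_lower (Or.inr rfl) (φ x)
        rwa [if_neg one_ne_zero] at hG
    have h1 : c * (∫ x, (‖φ x‖^2)^k) ≤ ∫ x, (nlDensity μ (φ x) - 2 * Fmu μ (φ x)) := by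
      rw [← integral_const_mul]
      exact integral_mono ((integrable_tk hm hφe hk).const_mul c) (integrable_G hμ hm hφe)
        hlow
    have h2 := integral_tk_pos hm hφe hφ0 hk
    nlinarith
  have hIeq : Imu μ φ = gradSq φ - ∫ x, (nlDensity μ (φ x) - 2 * Fmu μ (φ x)) := rfl
  -- key implications
  have key1 : 0 < Pmu μ φ → 0 < Imu μ φ := by
    intro hP
    rcases lt_trichotomy (Imu μ φ) 0 with hI | hI | hI
    · exfalso
      have hgC : gradSq φ < ∫ x, (nlDensity μ (φ x) - 2 * Fmu μ (φ x)) := by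
        rw [hIeq] at hI; linarith
      rcases eq_or_lt_of_le (gradSq_nonneg φ) with hg0 | hgpos
      · -- gradient zero: use the scaling along `lam • φ` and the `P`-minimality
        obtain ⟨lam, hlam1, hlamP⟩ := exists_smul_P_zero μ hμ φ hφ1 hφe hφ0 hP
        have hlam0 : lam ≠ 0 := by intro h; rw [h] at hlam1; linarith
        have hmem := hPchar.2 ⟨fun x => lam • φ x, memH1_smul hφ1 lam,
          expint_smul hφe lam, nonzero_smul hφ0 hlam0, hlamP, rfl⟩
        have hgs : gradSq (fun x => lam • φ x) = 0 := by
          rw [grad_smul hφ1.2.1 lam, ← hg0]; ring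
        have hSsm : Smu μ (fun x => lam • φ x) = 0 := by
          rw [Smu_eq, hgs, hlamP]; ring
        have hSQpos := SQ_pos μ hμ hIchar.1
        rw [hSsm] at hmem
        linarith
      · refine dilation_absurd μ hμ hlbI φ hφ1 hφe hφ0 hS hgpos hCpos ?_
        have hr : gradSq φ / (∫ x, (nlDensity μ (φ x) - 2 * Fmu μ (φ x))) < 1 :=
          (div_lt_one hCpos).2 hgC
        nlinarith
    · exact absurd hI hIne
    · exact hI
  have key2 : Pmu μ φ < 0 → Imu μ φ < 0 := by
    intro hP
    rcases lt_trichotomy (Imu μ φ) 0 with hI | hI | hI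
    · exact hI
    · exact absurd hI hIne
    · exfalso
      have hgC : (∫ x, (nlDensity μ (φ x) - 2 * Fmu μ (φ x))) < gradSq φ := by
        rw [hIeq] at hI; linarith
      have hgpos : 0 < gradSq φ := lt_trans hCpos hgC
      refine dilation_absurd μ hμ hlbI φ hφ1 hφe hφ0 hS hgpos hCpos ?_
      have hr : 1 < gradSq φ / (∫ x, (nlDensity μ (φ x) - 2 * Fmu μ (φ x))) :=
        (one_lt_div hCpos).2 hgC
      nlinarith
  refine ⟨⟨key1, fun hI => ?_⟩, ⟨key2, fun hI => ?_⟩⟩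
  · rcases lt_trichotomy (Pmu μ φ) 0 with h | h | h
    · have := key2 h; linarith
    · exact absurd h hPne
    · exact h
  · rcases lt_trichotomy (Pmu μ φ) 0 with h | h | h
    · exact h
    · exact absurd h hPne
    · have := key1 h; linarith
end
end

section
/- Let φ ∈ 𝒜̄⁺₁, i.e. φ ∈ H¹(ℝ²) with S₁(φ) < S₁(Q₁) and P₁(φ) ≥ 0. Then I₁(φ) ≥ min{ 2(S₁(Q₁) − S₁(φ)), ∫ k₁(4π|φ|²) dx }, where k₁(s) = (1/(4π))((1/2)s²e^s − s e^s + e^s − 1). Moreover k₁(s) ≥ s³/(24π) for all s ≥ 0, so that ∫ k₁(4π|φ|²) dx ≥ (8π²/3)‖φ‖⁶_{L⁶}. -/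
open MeasureTheory Real Filter
open scoped Topology ENNReal

noncomputable section

/-- The function `k₁(s) = (1/(4π))((1/2)s²eˢ - s eˢ + eˢ - 1)`. -/
def k1 (s : ℝ) : ℝ :=
  (1 / (4 * π)) * ((1 / 2) * s ^ 2 * Real.exp s - s * Real.exp s + Real.exp s - 1)

namespace CoercAux

/-! ### One-variable calculus lemmas -/

lemma mono_on_Ici (f f' : ℝ → ℝ) (hder : ∀ t, HasDerivAt f (f' t) t)
    (h' : ∀ t, 0 < t → 0 ≤ f' t) : MonotoneOn f (Set.Ici (0:ℝ)) := by
  refine monotoneOn_of_deriv_nonneg (convex_Ici 0)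
    (fun t _ => ((hder t).differentiableAt).continuousAt.continuousWithinAt)
    (fun t _ => ((hder t).differentiableAt).differentiableWithinAt) ?_
  intro t ht
  rw [interior_Ici] at ht
  rw [(hder t).deriv]
  exact h' t ht

lemma nonneg_on_Ici (f f' : ℝ → ℝ) (hder : ∀ t, HasDerivAt f (f' t) t)
    (h0 : f 0 = 0) (h' : ∀ t, 0 < t → 0 ≤ f' t) {t : ℝ} (ht : 0 ≤ t) : 0 ≤ f t := by
  have := mono_on_Ici f f' hder h' (Set.self_mem_Ici) ht ht
  rwa [h0] at this

/-- `Ff t = e^t - 1 - t - t²/2`. -/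
def Ff (t : ℝ) : ℝ := exp t - 1 - t - t^2/2
/-- `hf t = t e^t - e^t + 1 - t²/2`. -/
def hf (t : ℝ) : ℝ := t * exp t - exp t + 1 - t^2/2
/-- `Mf t = t e^t - 2 e^t + t + 2`. -/
def Mf (t : ℝ) : ℝ := t * exp t - 2 * exp t + t + 2
/-- `K8 t = t² e^t - 2 t e^t + 2 e^t - 2 = 8π k1 t`. -/
def K8 (t : ℝ) : ℝ := t^2 * exp t - 2*t*exp t + 2*exp t - 2

lemma hasDerivAt_Ff (t : ℝ) : HasDerivAt Ff (exp t - 1 - t) t := by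
  have h := (((Real.hasDerivAt_exp t).sub_const 1).sub (hasDerivAt_id' t)).sub
      ((hasDerivAt_pow 2 t).div_const 2)
  exact h.congr_deriv (by norm_num)

lemma hasDerivAt_hf (t : ℝ) : HasDerivAt hf (t * (exp t - 1)) t := by
  have h := ((((hasDerivAt_id' t).mul (Real.hasDerivAt_exp t)).sub (Real.hasDerivAt_exp t)).add_const
      1).sub ((hasDerivAt_pow 2 t).div_const 2)
  exact h.congr_deriv (by norm_num; ring)

lemma hasDerivAt_Mf (t : ℝ) : HasDerivAt Mf (t * exp t - exp t + 1) t := by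
  have h : HasDerivAt (fun t : ℝ => t * exp t - 2 * exp t + t + 2)
      ((1 * exp t + t * exp t) - 2 * exp t + 1) t := by
    exact (((((hasDerivAt_id t).mul (Real.hasDerivAt_exp t)).sub
      ((Real.hasDerivAt_exp t).const_mul 2)).add (hasDerivAt_id t)).add_const 2)
  exact h.congr_deriv (by ring)

lemma hasDerivAt_K8 (t : ℝ) : HasDerivAt K8 (t^2 * exp t) t := by
  have h : HasDerivAt (fun t : ℝ => t^2 * exp t - 2*t*exp t + 2*exp t - 2)
      ((2*t^1 * exp t + t^2 * exp t) - ((2*1) * exp t + 2*t*exp t) + 2*exp t) t := by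
    refine ((((hasDerivAt_pow 2 t).mul (Real.hasDerivAt_exp t)).sub
      (((((hasDerivAt_id t).const_mul 2)).mul (Real.hasDerivAt_exp t)))).add
      ((Real.hasDerivAt_exp t).const_mul 2)).sub_const 2
  exact h.congr_deriv (by ring)

lemma exp_term_nonneg {t : ℝ} (ht : 0 ≤ t) : 0 ≤ exp t - 1 := by
  have := Real.add_one_le_exp t; linarith

lemma Ff'_nonneg {t : ℝ} (ht : 0 ≤ t) : 0 ≤ exp t - 1 - t := by
  have := Real.add_one_le_exp t; linarith

lemma Ff_nonneg {t : ℝ} (ht : 0 ≤ t) : 0 ≤ Ff t := by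
  refine nonneg_on_Ici Ff (fun t => exp t - 1 - t) hasDerivAt_Ff ?_ ?_ ht
  · simp [Ff]
  · intro t ht'; exact Ff'_nonneg ht'.le

lemma hf_nonneg {t : ℝ} (ht : 0 ≤ t) : 0 ≤ hf t := by
  refine nonneg_on_Ici hf (fun t => t * (exp t - 1)) hasDerivAt_hf ?_ ?_ ht
  · simp [hf]
  · intro t ht'; exact mul_nonneg ht'.le (exp_term_nonneg ht'.le)

lemma Mf'_nonneg {t : ℝ} (ht : 0 ≤ t) : 0 ≤ t * exp t - exp t + 1 := by
  refine nonneg_on_Ici (fun t => t * exp t - exp t + 1) (fun t => t * exp t)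
    (fun t => by
      have h : HasDerivAt (fun t : ℝ => t * exp t - exp t + 1)
          ((1 * exp t + t * exp t) - exp t) t :=
        (((hasDerivAt_id t).mul (Real.hasDerivAt_exp t)).sub (Real.hasDerivAt_exp t)).add_const 1
      convert h using 1; ring) ?_ ?_ ht
  · simp
  · intro t ht'; positivity

lemma Mf_nonneg {t : ℝ} (ht : 0 ≤ t) : 0 ≤ Mf t := by
  refine nonneg_on_Ici Mf (fun t => t * exp t - exp t + 1) hasDerivAt_Mf ?_ ?_ ht
  · simp [Mf]
  · intro t ht'; exact Mf'_nonneg ht'.le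

lemma K8_nonneg {t : ℝ} (ht : 0 ≤ t) : 0 ≤ K8 t := by
  refine nonneg_on_Ici K8 (fun t => t^2 * exp t) hasDerivAt_K8 ?_ ?_ ht
  · simp [K8]
  · intro t ht'; positivity

/-- `r u = u K8'(u) - K8 u ≥ 0`. -/
lemma rfun_nonneg {t : ℝ} (ht : 0 ≤ t) :
    0 ≤ t^3 * exp t - t^2 * exp t + 2*t*exp t - 2*exp t + 2 := by
  refine nonneg_on_Ici (fun t => t^3 * exp t - t^2 * exp t + 2*t*exp t - 2*exp t + 2)
    (fun t => t^3 * exp t + 2*t^2*exp t) (fun t => ?_) (by simp) ?_ ht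
  · have h : HasDerivAt (fun t : ℝ => t^3 * exp t - t^2 * exp t + 2*t*exp t - 2*exp t + 2)
        ((((3*t^2 * exp t + t^3 * exp t) - (2*t^1 * exp t + t^2 * exp t)) +
          ((2*1) * exp t + 2*t*exp t)) - 2*exp t) t := by
      refine (((((hasDerivAt_pow 3 t).mul (Real.hasDerivAt_exp t)).sub
        ((hasDerivAt_pow 2 t).mul (Real.hasDerivAt_exp t))).add
        ((((hasDerivAt_id t).const_mul 2)).mul (Real.hasDerivAt_exp t))).sub
        ((Real.hasDerivAt_exp t).const_mul 2)).add_const 2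
    convert h using 1; ring
  · intro t ht'; positivity

/-- `K8 t ≥ t³/3`. -/
lemma K8_ge_cube {t : ℝ} (ht : 0 ≤ t) : t^3/3 ≤ K8 t := by
  have h := nonneg_on_Ici (fun t => K8 t - t^3/3) (fun t => t^2 * exp t - 3*t^2/3)
    (fun t => (hasDerivAt_K8 t).sub (((hasDerivAt_pow 3 t).div_const 3).congr_deriv (by ring)))
    (by simp [K8]) (fun t ht' => by nlinarith [Real.add_one_le_exp t, sq_nonneg t]) ht
  linarith

/-- monotonicity of `λ ↦ e^{-2λ} K8 (e^{2λ} t)`. -/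
lemma eta_hasDerivAt (t l : ℝ) :
    HasDerivAt (fun l => exp (-(2*l)) * K8 (exp (2*l) * t))
      (2 * exp (-(2*l)) * ((exp (2*l)*t)^3 * exp (exp (2*l)*t)
        - (exp (2*l)*t)^2 * exp (exp (2*l)*t) + 2*(exp (2*l)*t)*exp (exp (2*l)*t)
        - 2*exp (exp (2*l)*t) + 2)) l := by
  have h1 : HasDerivAt (fun l : ℝ => exp (-(2*l))) (exp (-(2*l)) * (-2)) l := by
    have := ((hasDerivAt_id l).const_mul (-2 : ℝ)).exp
    simpa [neg_mul, mul_comm] using this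
  have h2 : HasDerivAt (fun l : ℝ => exp (2*l) * t) (exp (2*l) * 2 * t) l := by
    have := (((hasDerivAt_id l).const_mul (2 : ℝ)).exp).mul_const t
    simpa [mul_comm] using this
  have h3 : HasDerivAt (fun l : ℝ => K8 (exp (2*l) * t))
      ((exp (2*l)*t)^2 * exp (exp (2*l)*t) * (exp (2*l) * 2 * t)) l :=
    (hasDerivAt_K8 _).comp l h2
  have h := h1.mul h3
  exact h.congr_deriv (by simp only [K8]; ring)

lemma eta_mono (t : ℝ) (ht : 0 ≤ t) :
    Monotone (fun l => exp (-(2*l)) * K8 (exp (2*l) * t)) := by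
  refine monotone_of_deriv_nonneg (fun l => (eta_hasDerivAt t l).differentiableAt) (fun l => ?_)
  rw [(eta_hasDerivAt t l).deriv]
  have hu : 0 ≤ exp (2*l) * t := mul_nonneg (exp_pos _).le ht
  have := rfun_nonneg hu
  positivity

/-- The key pointwise inequality (★). -/
lemma star_ineq {t l : ℝ} (ht : 0 ≤ t) (hl : 0 ≤ l) :
    Mf t + 2*l*K8 t ≤ exp (-(2*l)) * Mf (exp (2*l) * t) := by
  have hzeta : ∀ s : ℝ, HasDerivAt (fun l => exp (-(2*l)) * Mf (exp (2*l) * t) - 2*l*K8 t)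
      (2 * exp (-(2*s)) * K8 (exp (2*s) * t) - 2*K8 t) s := by
    intro s
    have h1 : HasDerivAt (fun l : ℝ => exp (-(2*l))) (exp (-(2*s)) * (-2)) s := by
      have := ((hasDerivAt_id s).const_mul (-2 : ℝ)).exp
      simpa [neg_mul, mul_comm] using this
    have h2 : HasDerivAt (fun l : ℝ => exp (2*l) * t) (exp (2*s) * 2 * t) s := by
      have := (((hasDerivAt_id s).const_mul (2 : ℝ)).exp).mul_const t
      simpa [mul_comm] using this
    have h3 : HasDerivAt (fun l : ℝ => Mf (exp (2*l) * t))
        (((exp (2*s)*t) * exp (exp (2*s)*t) - exp (exp (2*s)*t) + 1) * (exp (2*s) * 2 * t)) s :=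
      (hasDerivAt_Mf _).comp s h2
    have h := (h1.mul h3).sub (((hasDerivAt_id' s).const_mul (2:ℝ)).mul_const (K8 t))
    exact h.congr_deriv (by simp only [Mf, K8]; ring)
  have hmono : MonotoneOn (fun l => exp (-(2*l)) * Mf (exp (2*l) * t) - 2*l*K8 t)
      (Set.Ici (0:ℝ)) := by
    refine mono_on_Ici _ _ hzeta (fun s hs => ?_)
    have := eta_mono t ht hs.le
    simp only [mul_zero, Real.exp_zero, neg_zero, one_mul, mul_one] at this
    simp only [mul_assoc]
    nlinarith [this]
  have h := hmono Set.self_mem_Ici hl hl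
  simp only [mul_zero, Real.exp_zero, neg_zero, one_mul, zero_mul, sub_zero, mul_one] at h
  linarith

end CoercAux

namespace CoercAux2
open CoercAux Metric


variable {T : E2 → ℝ}

lemma integrable_comp_T (hTc : Continuous T) (hTnn : ∀ x, 0 ≤ T x)
    (hTint : ∀ a : ℝ, 0 < a → Integrable (fun x => exp (a * T x) - 1))
    {g : ℝ → ℝ} (hg : Continuous g) {b C : ℝ} (hb : 0 < b)
    (hbd : ∀ t, 0 ≤ t → |g t| ≤ C * (exp (b*t) - 1)) :
    Integrable (fun x => g (T x)) := by
  refine ((hTint b hb).const_mul C).mono' (hg.comp hTc).aestronglyMeasurable ?_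
  filter_upwards with x
  rw [Real.norm_eq_abs]
  exact hbd _ (hTnn x)

lemma hasDerivAt_JT (hTc : Continuous T) (hTnn : ∀ x, 0 ≤ T x)
    (hTint : ∀ a : ℝ, 0 < a → Integrable (fun x => exp (a * T x) - 1))
    (g g' : ℝ → ℝ) (hder : ∀ t, HasDerivAt g (g' t) t) (hg'c : Continuous g')
    (hmono : ∀ u v, 0 ≤ u → u ≤ v → u * |g' u| ≤ v * |g' v|)
    {b C : ℝ} (hb : 0 < b) (hC : ∀ u, 0 ≤ u → u * |g' u| ≤ C * (exp (b*u) - 1))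
    {bg Cg : ℝ} (hbg : 0 < bg) (hgbd : ∀ t, 0 ≤ t → |g t| ≤ Cg * (exp (bg*t) - 1))
    (l : ℝ) :
    Integrable (fun x => 2 * exp (2*l) * T x * g' (exp (2*l) * T x)) ∧
      HasDerivAt (fun l => ∫ x : E2, g (exp (2*l) * T x))
        (∫ x : E2, 2 * exp (2*l) * T x * g' (exp (2*l) * T x)) l := by
  have hgc : Continuous g := by
    have : Differentiable ℝ g := fun t => (hder t).differentiableAt
    exact this.continuous
  have key := hasDerivAt_integral_of_dominated_loc_of_deriv_le (𝕜 := ℝ) (μ := volume)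
    (F := fun l x => g (exp (2*l) * T x))
    (F' := fun l x => 2 * exp (2*l) * T x * g' (exp (2*l) * T x))
    (x₀ := l) (bound := fun x => 2 * C * (exp ((b * exp (2*l+2)) * T x) - 1))
    (s := ball l 1) (ball_mem_nhds l one_pos) ?_ ?_ ?_ ?_ ?_ ?_
  · exact ⟨key.1, key.2⟩
  · filter_upwards with l'
    exact ((hgc.comp ((continuous_const).mul hTc)).aestronglyMeasurable)
  · -- integrability of g (e^{2l} T x)
    refine integrable_comp_T hTc hTnn hTint (g := fun t => g (exp (2*l) * t))
      (hgc.comp (continuous_const.mul continuous_id)) (b := bg * exp (2*l)) (C := Cg)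
      (by positivity) ?_
    intro t ht
    have := hgbd (exp (2*l) * t) (by positivity)
    calc |g (exp (2*l) * t)| ≤ Cg * (exp (bg * (exp (2*l) * t)) - 1) := this
      _ = Cg * (exp (bg * exp (2*l) * t) - 1) := by ring_nf
  · exact (((continuous_const.mul hTc).mul
      (hg'c.comp (continuous_const.mul hTc))).aestronglyMeasurable)
  · -- the uniform bound on the ball
    filter_upwards with x
    intro l' hl'
    have hTx := hTnn x
    have hle : exp (2*l') ≤ exp (2*l+2) := by
      apply exp_le_exp.2
      rw [mem_ball, Real.dist_eq, abs_lt] at hl'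
      linarith [hl'.2]
    have hu : (0:ℝ) ≤ exp (2*l') * T x := by positivity
    have huv : exp (2*l') * T x ≤ exp (2*l+2) * T x :=
      mul_le_mul_of_nonneg_right hle hTx
    have h1 : exp (2*l') * T x * |g' (exp (2*l') * T x)| ≤
        exp (2*l+2) * T x * |g' (exp (2*l+2) * T x)| := hmono _ _ hu huv
    have h2 : exp (2*l+2) * T x * |g' (exp (2*l+2) * T x)| ≤
        C * (exp (b * (exp (2*l+2) * T x)) - 1) := hC _ (by positivity)
    rw [Real.norm_eq_abs]
    calc |2 * exp (2*l') * T x * g' (exp (2*l') * T x)|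
        = 2 * (exp (2*l') * T x * |g' (exp (2*l') * T x)|) := by
          rw [abs_mul]
          rw [abs_of_nonneg (by positivity : (0:ℝ) ≤ 2 * exp (2*l') * T x)]
          ring
      _ ≤ 2 * (C * (exp (b * (exp (2*l+2) * T x)) - 1)) := by
          have := h1.trans h2; linarith
      _ = 2 * C * (exp (b * exp (2*l+2) * T x) - 1) := by ring_nf
  · -- integrability of the bound
    exact (hTint (b * exp (2*l+2)) (by positivity)).const_mul (2*C)
  · -- pointwise differentiability in the parameter
    filter_upwards with x
    intro l' _
    have h2 : HasDerivAt (fun l' : ℝ => exp (2*l') * T x) (exp (2*l') * 2 * T x) l' := by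
      have := (((hasDerivAt_id' l').const_mul (2:ℝ)).exp).mul_const (T x)
      simpa [mul_comm] using this
    have h3 := (hder (exp (2*l') * T x)).comp l' h2
    exact h3.congr_deriv (by ring)

end CoercAux2

namespace CoercScale

open CoercAux Metric

/-- Change of variables under dilation on `E2`. -/
lemma int_comp_scale {F : Type*} [NormedAddCommGroup F] [NormedSpace ℝ F]
    (f : E2 → F) (l : ℝ) :
    ∫ x : E2, f (Real.exp l • x) = Real.exp (-(2*l)) • ∫ x : E2, f x := by
  rw [Measure.integral_comp_smul (volume : Measure E2) f (Real.exp l)]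
  congr 1
  rw [finrank_euclideanSpace_fin]
  rw [abs_of_nonneg (by positivity)]
  rw [← Real.exp_nat_mul, ← Real.exp_neg]
  norm_num

lemma int_comp_scale_real (f : E2 → ℝ) (l : ℝ) :
    ∫ x : E2, f (Real.exp l • x) = Real.exp (-(2*l)) * ∫ x : E2, f x :=
  int_comp_scale f l

lemma qmp_scale {r : ℝ} (hr : r ≠ 0) :
    Measure.QuasiMeasurePreserving (fun x : E2 => r • x) volume volume := by
  refine ⟨(continuous_const_smul r).measurable, ?_⟩
  rw [show (fun x : E2 => r • x) = (r • · : E2 → E2) from rfl]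
  rw [Measure.map_addHaar_smul (volume : Measure E2) hr]
  exact Measure.smul_absolutelyContinuous

variable (φ : E2 → ℂ) (l : ℝ)

/-- The rescaled function `e^λ φ(e^λ x)`. -/
def scaleFn : E2 → ℂ := fun x => ((Real.exp l : ℝ) : ℂ) * φ (Real.exp l • x)

lemma scaleFn_norm_sq (x : E2) :
    ‖scaleFn φ l x‖^2 = Real.exp (2*l) * ‖φ (Real.exp l • x)‖^2 := by
  rw [scaleFn, norm_mul, Complex.norm_real, Real.norm_eq_abs,
    abs_of_nonneg (Real.exp_pos l).le, mul_pow, ← Real.exp_nat_mul]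
  norm_num

lemma scaleFn_hasFDerivAt (hφd : Differentiable ℝ φ) (x : E2) :
    HasFDerivAt (scaleFn φ l)
      (Real.exp (2*l) • fderiv ℝ φ (Real.exp l • x)) x := by
  have hlin : HasFDerivAt (fun x : E2 => Real.exp l • x)
      (Real.exp l • ContinuousLinearMap.id ℝ E2) x := by
    have h := (Real.exp l • ContinuousLinearMap.id ℝ E2).hasFDerivAt (x := x)
    have heq : ⇑(Real.exp l • ContinuousLinearMap.id ℝ E2) = fun x : E2 => Real.exp l • x := by
      ext y
      simp
    rwa [heq] at h
  have h1 := ((hφd (Real.exp l • x)).hasFDerivAt).comp x hlin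
  have h2 := h1.const_mul ((Real.exp l : ℝ) : ℂ)
  have heq2 : (fderiv ℝ φ (Real.exp l • x)).comp (Real.exp l • ContinuousLinearMap.id ℝ E2)
      = Real.exp l • fderiv ℝ φ (Real.exp l • x) := by
    ext y
    simp [_root_.map_smul]
  rw [heq2] at h2
  have heq3 : ((Real.exp l : ℝ) : ℂ) • (Real.exp l • fderiv ℝ φ (Real.exp l • x))
      = Real.exp (2*l) • fderiv ℝ φ (Real.exp l • x) := by
    ext v
    simp only [ContinuousLinearMap.smul_apply, smul_eq_mul, Complex.real_smul]
    rw [show Real.exp (2*l) = Real.exp l * Real.exp l by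
      rw [← Real.exp_add]; ring_nf]
    push_cast
    ring
  rw [heq3] at h2
  exact h2

lemma scaleFn_fderiv_norm_sq (hφd : Differentiable ℝ φ) (x : E2) :
    ‖fderiv ℝ (scaleFn φ l) x‖^2
      = Real.exp (4*l) * ‖fderiv ℝ φ (Real.exp l • x)‖^2 := by
  rw [(scaleFn_hasFDerivAt φ l hφd x).fderiv]
  have hns := norm_smul (α := ℝ) (β := E2 →L[ℝ] ℂ) (Real.exp (2*l)) (fderiv ℝ φ (Real.exp l • x))
  rw [hns, Real.norm_eq_abs, abs_of_nonneg (Real.exp_pos _).le]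
  rw [mul_pow, ← Real.exp_nat_mul]
  rw [show ((2:ℕ):ℝ) * (2*l) = 4*l by push_cast; ring]

lemma scaleFn_differentiable (hφd : Differentiable ℝ φ) :
    Differentiable ℝ (scaleFn φ l) :=
  fun x => (scaleFn_hasFDerivAt φ l hφd x).differentiableAt

lemma scaleFn_continuous (hφd : Differentiable ℝ φ) : Continuous (scaleFn φ l) :=
  (scaleFn_differentiable φ l hφd).continuous

lemma scaleFn_l2Sq : l2Sq (scaleFn φ l) = l2Sq φ := by
  unfold l2Sq
  rw [show (fun x : E2 => ‖scaleFn φ l x‖^2)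
      = fun x => Real.exp (2*l) * ‖φ (Real.exp l • x)‖^2 from funext (scaleFn_norm_sq φ l)]
  rw [MeasureTheory.integral_const_mul]
  rw [show (∫ x : E2, ‖φ (Real.exp l • x)‖^2) = Real.exp (-(2*l)) * ∫ x : E2, ‖φ x‖^2 from
    int_comp_scale_real (fun y => ‖φ y‖^2) l]
  rw [← mul_assoc, ← Real.exp_add]
  norm_num

lemma scaleFn_gradSq (hφd : Differentiable ℝ φ) :
    gradSq (scaleFn φ l) = Real.exp (2*l) * gradSq φ := by
  unfold gradSq
  rw [show (fun x : E2 => ‖fderiv ℝ (scaleFn φ l) x‖^2)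
      = fun x => Real.exp (4*l) * ‖fderiv ℝ φ (Real.exp l • x)‖^2 from
    funext (scaleFn_fderiv_norm_sq φ l hφd)]
  rw [MeasureTheory.integral_const_mul]
  rw [show (∫ x : E2, ‖fderiv ℝ φ (Real.exp l • x)‖^2)
      = Real.exp (-(2*l)) * ∫ x : E2, ‖fderiv ℝ φ x‖^2 from
    int_comp_scale_real (fun y => ‖fderiv ℝ φ y‖^2) l]
  rw [← mul_assoc, ← Real.exp_add]
  rw [show (4:ℝ)*l + -(2*l) = 2*l by ring]

lemma Fmu_eq_Ff (z : ℂ) : Fmu 1 z = Ff (4*π*‖z‖^2) / (8*π) := by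
  simp only [Fmu, Ff]
  have hπ : (π:ℝ) ≠ 0 := Real.pi_ne_zero
  field_simp
  ring

lemma nl_eq_hf (z : ℂ) : nlDensity 1 z - 2 * Fmu 1 z = hf (4*π*‖z‖^2) / (4*π) := by
  simp only [nlDensity, Fmu, hf]
  have hπ : (π:ℝ) ≠ 0 := Real.pi_ne_zero
  field_simp
  ring

lemma scaleFn_int_Fmu :
    ∫ x : E2, Fmu 1 (scaleFn φ l x)
      = Real.exp (-(2*l)) * (∫ y : E2, Ff (Real.exp (2*l) * (4*π*‖φ y‖^2))) / (8*π) := by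
  have hpt : ∀ x : E2, Fmu 1 (scaleFn φ l x)
      = (fun y : E2 => Ff (Real.exp (2*l) * (4*π*‖φ y‖^2)) / (8*π)) (Real.exp l • x) := by
    intro x
    show _ = Ff (Real.exp (2*l) * (4*π*‖φ (Real.exp l • x)‖^2)) / (8*π)
    rw [Fmu_eq_Ff, scaleFn_norm_sq]
    congr 2
    ring
  rw [show (fun x : E2 => Fmu 1 (scaleFn φ l x))
      = fun x => (fun y : E2 => Ff (Real.exp (2*l) * (4*π*‖φ y‖^2)) / (8*π)) (Real.exp l • x)
      from funext hpt]
  rw [show (∫ x : E2, (fun y : E2 => Ff (Real.exp (2*l) * (4*π*‖φ y‖^2)) / (8*π))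
        (Real.exp l • x))
      = Real.exp (-(2*l)) * ∫ y : E2, Ff (Real.exp (2*l) * (4*π*‖φ y‖^2)) / (8*π) from
    int_comp_scale_real (fun y : E2 => Ff (Real.exp (2*l) * (4*π*‖φ y‖^2)) / (8*π)) l]
  rw [integral_div]
  ring

lemma scaleFn_int_nl :
    ∫ x : E2, (nlDensity 1 (scaleFn φ l x) - 2 * Fmu 1 (scaleFn φ l x))
      = Real.exp (-(2*l)) * (∫ y : E2, hf (Real.exp (2*l) * (4*π*‖φ y‖^2))) / (4*π) := by
  have hpt : ∀ x : E2, nlDensity 1 (scaleFn φ l x) - 2 * Fmu 1 (scaleFn φ l x)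
      = (fun y : E2 => hf (Real.exp (2*l) * (4*π*‖φ y‖^2)) / (4*π)) (Real.exp l • x) := by
    intro x
    show _ = hf (Real.exp (2*l) * (4*π*‖φ (Real.exp l • x)‖^2)) / (4*π)
    rw [nl_eq_hf, scaleFn_norm_sq]
    congr 2
    ring
  rw [show (fun x : E2 => nlDensity 1 (scaleFn φ l x) - 2 * Fmu 1 (scaleFn φ l x))
      = fun x => (fun y : E2 => hf (Real.exp (2*l) * (4*π*‖φ y‖^2)) / (4*π)) (Real.exp l • x)
      from funext hpt]
  rw [show (∫ x : E2, (fun y : E2 => hf (Real.exp (2*l) * (4*π*‖φ y‖^2)) / (4*π))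
        (Real.exp l • x))
      = Real.exp (-(2*l)) * ∫ y : E2, hf (Real.exp (2*l) * (4*π*‖φ y‖^2)) / (4*π) from
    int_comp_scale_real (fun y : E2 => hf (Real.exp (2*l) * (4*π*‖φ y‖^2)) / (4*π)) l]
  rw [integral_div]
  ring

lemma scaleFn_memH1 (hφmem : MemH1 φ) : MemH1 (scaleFn φ l) := by
  obtain ⟨h2, hd, hg⟩ := hφmem
  have hcont : Continuous φ := hd.continuous
  refine ⟨?_, scaleFn_differentiable φ l hd, ?_⟩
  · rw [memLp_two_iff_integrable_sq_norm (scaleFn_continuous φ l hd).aestronglyMeasurable]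
    have hint : Integrable (fun y : E2 => ‖φ y‖^2) :=
      (memLp_two_iff_integrable_sq_norm hcont.aestronglyMeasurable).mp h2
    rw [show (fun x : E2 => ‖scaleFn φ l x‖^2)
        = fun x => Real.exp (2*l) * (fun y : E2 => ‖φ y‖^2) (Real.exp l • x) from
      funext (scaleFn_norm_sq φ l)]
    exact (hint.comp_smul (Real.exp_ne_zero l)).const_mul _
  · have haesm : AEStronglyMeasurable (fun x : E2 => fderiv ℝ φ (Real.exp l • x)) volume :=
      hg.aestronglyMeasurable.comp_quasiMeasurePreserving (qmp_scale (Real.exp_ne_zero l))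
    have haesm2 : AEStronglyMeasurable (fun x => fderiv ℝ (scaleFn φ l) x) volume := by
      rw [show (fun x => fderiv ℝ (scaleFn φ l) x)
          = fun x => Real.exp (2*l) • fderiv ℝ φ (Real.exp l • x) from
        funext (fun x => (scaleFn_hasFDerivAt φ l hd x).fderiv)]
      exact haesm.const_smul (Real.exp (2*l))
    rw [memLp_two_iff_integrable_sq_norm haesm2]
    have hint : Integrable (fun y : E2 => ‖fderiv ℝ φ y‖^2) :=
      (memLp_two_iff_integrable_sq_norm hg.aestronglyMeasurable).mp hg
    rw [show (fun x : E2 => ‖fderiv ℝ (scaleFn φ l) x‖^2)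
        = fun x => Real.exp (4*l) * (fun y : E2 => ‖fderiv ℝ φ y‖^2) (Real.exp l • x) from
      funext (scaleFn_fderiv_norm_sq φ l hd)]
    exact (hint.comp_smul (Real.exp_ne_zero l)).const_mul _

lemma scaleFn_expIntegrable (hφexp : ExpIntegrable φ) :
    ExpIntegrable (scaleFn φ l) := by
  intro a ha
  have h := (hφexp (a * Real.exp (2*l)) (by positivity)).comp_smul (Real.exp_ne_zero l)
  rw [show (fun x : E2 => Real.exp (a * ‖scaleFn φ l x‖^2) - 1)
      = fun x => (fun y : E2 => Real.exp ((a * Real.exp (2*l)) * ‖φ y‖^2) - 1)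
          (Real.exp l • x) from funext (fun x => by
        rw [scaleFn_norm_sq, show a * (Real.exp (2*l) * ‖φ (Real.exp l • x)‖^2)
          = a * Real.exp (2*l) * ‖φ (Real.exp l • x)‖^2 by ring])]
  exact h

lemma scaleFn_nontrivial (hφz : ¬ φ =ᵐ[volume] (0 : E2 → ℂ)) :
    ¬ scaleFn φ l =ᵐ[volume] (0 : E2 → ℂ) := by
  intro h
  apply hφz
  have h2 := (qmp_scale (Real.exp_ne_zero (-l))).ae_eq h
  filter_upwards [h2] with y hy
  simp only [Function.comp_apply, scaleFn, Pi.zero_apply] at hy ⊢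
  rw [smul_smul, ← Real.exp_add] at hy
  rw [show l + -l = 0 by ring, Real.exp_zero, one_smul] at hy
  rcases mul_eq_zero.mp hy with h3 | h3
  · exact absurd h3 (by exact_mod_cast Real.exp_ne_zero l)
  · exact h3

end CoercScale


namespace CoercAux

lemma one_le_exp' {t : ℝ} (ht : 0 ≤ t) : 1 ≤ exp t := by
  have := Real.add_one_le_exp t; linarith

lemma exp_sq : ∀ t : ℝ, exp t * exp t = exp (2*t) := by
  intro t; rw [← Real.exp_add]; ring_nf

lemma texp_le {t : ℝ} (ht : 0 ≤ t) : t * exp t ≤ exp (2*t) - 1 := by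
  have h1 := Real.add_one_le_exp t
  have h2 := Real.exp_pos t
  have h3 := exp_sq t
  nlinarith

lemma sq_le_exp {t : ℝ} (ht : 0 ≤ t) : t^2 ≤ 2*(exp t - 1) := by
  have := Real.quadratic_le_exp_of_nonneg ht
  nlinarith

lemma cube_le_exp {t : ℝ} (ht : 0 ≤ t) : t^3 ≤ 6*(exp t - 1) := by
  have h := Real.sum_le_exp_of_nonneg ht 4
  rw [Finset.sum_range_succ, Finset.sum_range_succ, Finset.sum_range_succ,
    Finset.sum_range_succ, Finset.sum_range_zero] at h
  norm_num [Nat.factorial] at h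
  nlinarith [sq_nonneg t]

lemma sqexp_le {t : ℝ} (ht : 0 ≤ t) : t^2 * exp t ≤ 2*(exp (2*t) - 1) := by
  have h1 := sq_le_exp ht
  have h2 := Real.exp_pos t
  have h3 := exp_sq t
  nlinarith

lemma abs_Ff_le {t : ℝ} (ht : 0 ≤ t) : |Ff t| ≤ exp t - 1 := by
  rw [abs_of_nonneg (Ff_nonneg ht)]
  simp only [Ff]
  nlinarith [sq_nonneg t]

lemma abs_hf_le {t : ℝ} (ht : 0 ≤ t) : |hf t| ≤ exp (2*t) - 1 := by
  rw [abs_of_nonneg (hf_nonneg ht)]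
  simp only [hf]
  have h1 := texp_le ht
  have h2 := one_le_exp' ht
  nlinarith [sq_nonneg t]

lemma abs_Mf_le {t : ℝ} (ht : 0 ≤ t) : |Mf t| ≤ 2*(exp (2*t) - 1) := by
  rw [abs_of_nonneg (Mf_nonneg ht)]
  simp only [Mf]
  have h1 := texp_le ht
  have h2 := one_le_exp' ht
  have h3 : t ≤ exp t - 1 := by have := Real.add_one_le_exp t; linarith
  have h4 : exp t ≤ exp (2*t) := Real.exp_le_exp.2 (by linarith)
  nlinarith

lemma abs_K8_le {t : ℝ} (ht : 0 ≤ t) : |K8 t| ≤ 4*(exp (2*t) - 1) := by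
  rw [abs_of_nonneg (K8_nonneg ht)]
  simp only [K8]
  have h1 := sqexp_le ht
  have h2 := one_le_exp' ht
  have h4 : exp t ≤ exp (2*t) := Real.exp_le_exp.2 (by linarith)
  have h5 : 0 ≤ t * exp t := by positivity
  nlinarith

/-- `u ↦ u (e^u - 1 - u)` is monotone on nonnegatives. -/
lemma mono_uFf' : ∀ u v : ℝ, 0 ≤ u → u ≤ v → u * |exp u - 1 - u| ≤ v * |exp v - 1 - v| := by
  intro u v hu huv
  rw [abs_of_nonneg (Ff'_nonneg hu), abs_of_nonneg (Ff'_nonneg (hu.trans huv))]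
  have hmono : exp u - 1 - u ≤ exp v - 1 - v := by
    have := mono_on_Ici (fun t => exp t - 1 - t) (fun t => exp t - 1)
      (fun t => ((Real.hasDerivAt_exp t).sub_const 1).sub (hasDerivAt_id' t))
      (fun t ht => by show (0:ℝ) ≤ Real.exp t - 1; have := Real.add_one_le_exp t; linarith)
      (Set.mem_Ici.2 hu) (Set.mem_Ici.2 (hu.trans huv)) huv
    simpa using this
  exact mul_le_mul huv hmono (Ff'_nonneg hu) (by linarith)

lemma bound_uFf' : ∀ u : ℝ, 0 ≤ u → u * |exp u - 1 - u| ≤ 1 * (exp (2*u) - 1) := by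
  intro u hu
  rw [abs_of_nonneg (Ff'_nonneg hu), one_mul]
  have h1 := texp_le hu
  nlinarith [sq_nonneg u]

lemma mono_uhf' : ∀ u v : ℝ, 0 ≤ u → u ≤ v →
    u * |u * (exp u - 1)| ≤ v * |v * (exp v - 1)| := by
  intro u v hu huv
  have hv : 0 ≤ v := hu.trans huv
  rw [abs_of_nonneg (mul_nonneg hu (exp_term_nonneg hu)),
    abs_of_nonneg (mul_nonneg hv (exp_term_nonneg hv))]
  have h1 : exp u - 1 ≤ exp v - 1 := by
    have := Real.exp_le_exp.2 huv; linarith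
  have h2 : u*u ≤ v*v := mul_le_mul huv huv hu hv
  calc u * (u * (exp u - 1)) = (u*u) * (exp u - 1) := by ring
    _ ≤ (v*v) * (exp v - 1) := mul_le_mul h2 h1 (exp_term_nonneg hu) (by positivity)
    _ = v * (v * (exp v - 1)) := by ring

lemma bound_uhf' : ∀ u : ℝ, 0 ≤ u → u * |u * (exp u - 1)| ≤ 2 * (exp (2*u) - 1) := by
  intro u hu
  rw [abs_of_nonneg (mul_nonneg hu (exp_term_nonneg hu))]
  have h1 := sqexp_le hu
  have h2 := Real.exp_pos u
  nlinarith [sq_nonneg u]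

lemma Ff_continuous : Continuous Ff := by unfold Ff; fun_prop
lemma hf_continuous : Continuous hf := by unfold hf; fun_prop
lemma Mf_continuous : Continuous Mf := by unfold Mf; fun_prop
lemma K8_continuous : Continuous K8 := by unfold K8; fun_prop
lemma Ff'_continuous : Continuous (fun t : ℝ => exp t - 1 - t) := by fun_prop
lemma hf'_continuous : Continuous (fun t : ℝ => t * (exp t - 1)) := by fun_prop

lemma hf_sub_Ff (t : ℝ) : hf t - Ff t = Mf t := by simp only [hf, Ff, Mf]; ring

lemma uFf'_sub_Ff (t : ℝ) : t * (exp t - 1 - t) - Ff t = hf t := by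
  simp only [Ff, hf]; ring

end CoercAux

namespace CoercMain

open CoercAux CoercAux2 CoercScale

/-- `T(x) = 4π |φ(x)|²`. -/
def Tf (φ : E2 → ℂ) : E2 → ℝ := fun x => 4*π*‖φ x‖^2

def JFf (φ : E2 → ℂ) (l : ℝ) : ℝ := ∫ x : E2, Ff (Real.exp (2*l) * Tf φ x)
def Jhf (φ : E2 → ℂ) (l : ℝ) : ℝ := ∫ x : E2, hf (Real.exp (2*l) * Tf φ x)
def Slf (φ : E2 → ℂ) (l : ℝ) : ℝ :=
  Real.exp (2*l) * gradSq φ / 2 + l2Sq φ / 2 - Real.exp (-(2*l)) * JFf φ l / (8*π)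
def Ilf (φ : E2 → ℂ) (l : ℝ) : ℝ :=
  Real.exp (2*l) * gradSq φ - Real.exp (-(2*l)) * Jhf φ l / (4*π)
def Plf (φ : E2 → ℂ) (l : ℝ) : ℝ := l2Sq φ / 2 - Real.exp (-(2*l)) * JFf φ l / (8*π)

variable (φ : E2 → ℂ)

lemma Tf_cont (hφd : Differentiable ℝ φ) : Continuous (Tf φ) :=
  continuous_const.mul ((hφd.continuous.norm).pow 2)

lemma Tf_nonneg : ∀ x, 0 ≤ Tf φ x := fun x => by
  have := Real.pi_pos
  simp only [Tf]
  positivity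

lemma Tf_int (hφexp : ExpIntegrable φ) :
    ∀ a : ℝ, 0 < a → Integrable (fun x => Real.exp (a * Tf φ x) - 1) := by
  intro a ha
  have hπ := Real.pi_pos
  have h := hφexp (a*(4*π)) (by positivity)
  have heq : (fun x => Real.exp (a * Tf φ x) - 1)
      = fun x => Real.exp ((a*(4*π))*‖φ x‖^2) - 1 := by
    funext x
    simp only [Tf]
    ring_nf
  rw [heq]
  exact h

variable (hφd : Differentiable ℝ φ) (hφexp : ExpIntegrable φ)

include hφd hφexp

lemma int_Ff (c : ℝ) (hc : 0 < c) : Integrable (fun x => Ff (c * Tf φ x)) := by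
  refine integrable_comp_T (Tf_cont φ hφd) (Tf_nonneg φ) (Tf_int φ hφexp)
    (Ff_continuous.comp (continuous_const.mul continuous_id)) (b := c) (C := 1) hc ?_
  intro t ht
  have := abs_Ff_le (t := c*t) (by positivity)
  simpa using this

lemma int_hf (c : ℝ) (hc : 0 < c) : Integrable (fun x => hf (c * Tf φ x)) := by
  refine integrable_comp_T (Tf_cont φ hφd) (Tf_nonneg φ) (Tf_int φ hφexp)
    (hf_continuous.comp (continuous_const.mul continuous_id)) (b := 2*c) (C := 1) (by positivity) ?_
  intro t ht
  have := abs_hf_le (t := c*t) (by positivity)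
  rw [one_mul]
  rw [show 2*c*t = 2*(c*t) by ring]
  exact this

lemma int_Mf (c : ℝ) (hc : 0 < c) : Integrable (fun x => Mf (c * Tf φ x)) := by
  refine integrable_comp_T (Tf_cont φ hφd) (Tf_nonneg φ) (Tf_int φ hφexp)
    (Mf_continuous.comp (continuous_const.mul continuous_id)) (b := 2*c) (C := 2) (by positivity) ?_
  intro t ht
  have := abs_Mf_le (t := c*t) (by positivity)
  rw [show 2*c*t = 2*(c*t) by ring]
  exact this

lemma int_K8 : Integrable (fun x => K8 (Tf φ x)) := by
  refine integrable_comp_T (Tf_cont φ hφd) (Tf_nonneg φ) (Tf_int φ hφexp)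
    K8_continuous (b := 2) (C := 4) (by norm_num) ?_
  intro t ht
  exact abs_K8_le ht

lemma int_k1 : Integrable (fun x => k1 (Tf φ x)) := by
  have hπ := Real.pi_pos
  refine integrable_comp_T (Tf_cont φ hφd) (Tf_nonneg φ) (Tf_int φ hφexp)
    (by unfold k1; fun_prop) (b := 2) (C := 1/(2*π)) (by norm_num) ?_
  intro t ht
  have h1 := abs_K8_le ht
  have h2 : k1 t = K8 t / (8*π) := by
    simp only [k1, K8]; field_simp; ring
  rw [h2, abs_div, abs_of_nonneg (by positivity : (0:ℝ) ≤ 8*π)]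
  rw [div_le_iff₀ (by positivity)]
  calc |K8 t| ≤ 4*(Real.exp (2*t) - 1) := h1
    _ = 1/(2*π) * (Real.exp (2*t) - 1) * (8*π) := by field_simp; ring

lemma JFf_deriv (l : ℝ) :
    Integrable (fun x => 2 * Real.exp (2*l) * Tf φ x *
        (Real.exp (Real.exp (2*l) * Tf φ x) - 1 - Real.exp (2*l) * Tf φ x)) ∧
      HasDerivAt (JFf φ) (∫ x : E2, 2 * Real.exp (2*l) * Tf φ x *
        (Real.exp (Real.exp (2*l) * Tf φ x) - 1 - Real.exp (2*l) * Tf φ x)) l := by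
  have h := hasDerivAt_JT (Tf_cont φ hφd) (Tf_nonneg φ) (Tf_int φ hφexp)
    Ff (fun t => Real.exp t - 1 - t) hasDerivAt_Ff Ff'_continuous mono_uFf'
    (b := 2) (C := 1) (by norm_num) bound_uFf'
    (bg := 1) (Cg := 1) one_pos (fun t ht => by simpa using abs_Ff_le ht) l
  exact h

lemma Jhf_deriv (l : ℝ) :
    Integrable (fun x => 2 * Real.exp (2*l) * Tf φ x *
        ((Real.exp (2*l) * Tf φ x) * (Real.exp (Real.exp (2*l) * Tf φ x) - 1))) ∧
      HasDerivAt (Jhf φ) (∫ x : E2, 2 * Real.exp (2*l) * Tf φ x *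
        ((Real.exp (2*l) * Tf φ x) * (Real.exp (Real.exp (2*l) * Tf φ x) - 1))) l := by
  have h := hasDerivAt_JT (Tf_cont φ hφd) (Tf_nonneg φ) (Tf_int φ hφexp)
    hf (fun t => t * (Real.exp t - 1)) hasDerivAt_hf hf'_continuous mono_uhf'
    (b := 2) (C := 2) (by norm_num) bound_uhf'
    (bg := 2) (Cg := 1) (by norm_num) (fun t ht => by simpa using abs_hf_le ht) l
  exact h

lemma JFf_cont : Continuous (JFf φ) := by
  have : Differentiable ℝ (JFf φ) := fun l => ((JFf_deriv φ hφd hφexp l).2).differentiableAt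
  exact this.continuous

lemma Jhf_cont : Continuous (Jhf φ) := by
  have : Differentiable ℝ (Jhf φ) := fun l => ((Jhf_deriv φ hφd hφexp l).2).differentiableAt
  exact this.continuous

lemma Ilf_cont : Continuous (Ilf φ) := by
  have h1 := Jhf_cont φ hφd hφexp
  have hc1 : Continuous fun l : ℝ => Real.exp (2*l) * gradSq φ :=
    (Real.continuous_exp.comp (continuous_const.mul continuous_id)).mul continuous_const
  have hc2 : Continuous fun l : ℝ => Real.exp (-(2*l)) * Jhf φ l / (4*π) :=
    ((Real.continuous_exp.comp ((continuous_const.mul continuous_id).neg)).mul h1).div_const _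
  exact hc1.sub hc2

lemma Plf_cont : Continuous (Plf φ) := by
  have h1 := JFf_cont φ hφd hφexp
  have hc2 : Continuous fun l : ℝ => Real.exp (-(2*l)) * JFf φ l / (8*π) :=
    ((Real.continuous_exp.comp ((continuous_const.mul continuous_id).neg)).mul h1).div_const _
  exact continuous_const.sub hc2

end CoercMain


namespace CoercMain

open CoercAux CoercAux2 CoercScale

variable (φ : E2 → ℂ)

section withhyp

variable (hφd : Differentiable ℝ φ) (hφexp : ExpIntegrable φ)

include hφd hφexp

lemma Slf_deriv (l : ℝ) : HasDerivAt (Slf φ) (Ilf φ l) l := by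
  have hπ := Real.pi_pos
  have hJF := (JFf_deriv φ hφd hφexp l).2
  have hintF' := (JFf_deriv φ hφd hφexp l).1
  set DJF := ∫ x : E2, 2 * Real.exp (2*l) * Tf φ x *
    (Real.exp (Real.exp (2*l) * Tf φ x) - 1 - Real.exp (2*l) * Tf φ x) with hDJF
  have hkey : DJF = 2 * JFf φ l + 2 * Jhf φ l := by
    have h1 : DJF - 2 * JFf φ l = ∫ x : E2, (2 * Real.exp (2*l) * Tf φ x *
        (Real.exp (Real.exp (2*l) * Tf φ x) - 1 - Real.exp (2*l) * Tf φ x)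
        - 2 * Ff (Real.exp (2*l) * Tf φ x)) := by
      rw [hDJF, JFf, ← MeasureTheory.integral_const_mul,
        ← integral_sub hintF' ((int_Ff φ hφd hφexp _ (Real.exp_pos _)).const_mul 2)]
    have h2 : (∫ x : E2, (2 * Real.exp (2*l) * Tf φ x *
        (Real.exp (Real.exp (2*l) * Tf φ x) - 1 - Real.exp (2*l) * Tf φ x)
        - 2 * Ff (Real.exp (2*l) * Tf φ x))) = 2 * Jhf φ l := by
      rw [Jhf, ← MeasureTheory.integral_const_mul]
      congr 1
      funext x
      simp only [Ff, hf]
      ring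
    rw [h2] at h1
    linarith
  have hexpn : HasDerivAt (fun l : ℝ => Real.exp (-(2*l))) (Real.exp (-(2*l)) * (-2)) l := by
    simpa [neg_mul, mul_comm] using ((hasDerivAt_id' l).const_mul (-2:ℝ)).exp
  have hexp2 : HasDerivAt (fun l : ℝ => Real.exp (2*l)) (Real.exp (2*l) * 2) l := by
    simpa [mul_comm] using ((hasDerivAt_id' l).const_mul (2:ℝ)).exp
  have hA : HasDerivAt (fun l : ℝ => Real.exp (2*l) * gradSq φ / 2 + l2Sq φ / 2)
      (Real.exp (2*l) * 2 * gradSq φ / 2) l :=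
    ((hexp2.mul_const (gradSq φ)).div_const 2).add_const _
  have hB : HasDerivAt (fun l : ℝ => Real.exp (-(2*l)) * JFf φ l / (8*π))
      ((Real.exp (-(2*l)) * (-2) * JFf φ l + Real.exp (-(2*l)) * DJF) / (8*π)) l :=
    (hexpn.mul hJF).div_const _
  have h := hA.sub hB
  refine h.congr_deriv ?_
  simp only [Ilf]
  rw [hkey]
  field_simp
  ring

lemma star_int {l : ℝ} (hl : 0 ≤ l) :
    2*Slf φ 0 - Ilf φ 0 + 4*l*(∫ x : E2, k1 (Tf φ x)) ≤ 2*Slf φ l - Ilf φ l := by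
  have hπ := Real.pi_pos
  have e1 : ∀ l' : ℝ, 2*Slf φ l' - Ilf φ l'
      = l2Sq φ + Real.exp (-(2*l')) * (Jhf φ l' - JFf φ l') / (4*π) := by
    intro l'
    simp only [Slf, Ilf]
    field_simp
    ring
  have e2 : ∀ l' : ℝ, Jhf φ l' - JFf φ l' = ∫ x : E2, Mf (Real.exp (2*l') * Tf φ x) := by
    intro l'
    rw [Jhf, JFf, ← integral_sub (int_hf φ hφd hφexp _ (Real.exp_pos _))
      (int_Ff φ hφd hφexp _ (Real.exp_pos _))]
    congr 1
    funext x
    exact hf_sub_Ff _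
  have e3 : (∫ x : E2, Mf (Real.exp (2*(0:ℝ)) * Tf φ x)) = ∫ x : E2, Mf (Tf φ x) := by
    congr 1
    funext x
    norm_num
  have hK8 : (∫ x : E2, K8 (Tf φ x)) = 8*π*∫ x : E2, k1 (Tf φ x) := by
    rw [← MeasureTheory.integral_const_mul]
    congr 1
    funext x
    simp only [K8, k1]
    field_simp
    ring
  have hintM1 : Integrable (fun x => Mf (Tf φ x)) := by
    have := int_Mf φ hφd hφexp 1 one_pos
    simpa using this
  have core : (∫ x : E2, Mf (Tf φ x)) + 2*l*(∫ x : E2, K8 (Tf φ x))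
      ≤ Real.exp (-(2*l)) * ∫ x : E2, Mf (Real.exp (2*l) * Tf φ x) := by
    have hint1 : Integrable (fun x => Mf (Tf φ x) + 2*l*K8 (Tf φ x)) :=
      hintM1.add ((int_K8 φ hφd hφexp).const_mul _)
    have hint2 : Integrable (fun x => Real.exp (-(2*l)) * Mf (Real.exp (2*l) * Tf φ x)) :=
      (int_Mf φ hφd hφexp _ (Real.exp_pos _)).const_mul _
    have hmono := integral_mono hint1 hint2 (fun x => star_ineq (Tf_nonneg φ x) hl)
    have hsplit : (∫ x : E2, (Mf (Tf φ x) + 2*l*K8 (Tf φ x)))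
        = (∫ x : E2, Mf (Tf φ x)) + 2*l*(∫ x : E2, K8 (Tf φ x)) := by
      rw [integral_add hintM1 ((int_K8 φ hφd hφexp).const_mul _),
        MeasureTheory.integral_const_mul]
    calc (∫ x : E2, Mf (Tf φ x)) + 2*l*(∫ x : E2, K8 (Tf φ x))
        = ∫ x : E2, (Mf (Tf φ x) + 2*l*K8 (Tf φ x)) := hsplit.symm
      _ ≤ ∫ x : E2, Real.exp (-(2*l)) * Mf (Real.exp (2*l) * Tf φ x) := hmono
      _ = Real.exp (-(2*l)) * ∫ x : E2, Mf (Real.exp (2*l) * Tf φ x) :=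
          MeasureTheory.integral_const_mul _ _
  have h0 : 2*Slf φ 0 - Ilf φ 0 = l2Sq φ + (∫ x : E2, Mf (Tf φ x))/(4*π) := by
    rw [e1 0, e2 0, e3]
    norm_num
  rw [e1 l, e2 l, h0]
  rw [hK8] at core
  have hd : ((∫ x : E2, Mf (Tf φ x)) + 2*l*(8*π*(∫ x : E2, k1 (Tf φ x))))/(4*π)
      ≤ (Real.exp (-(2*l)) * ∫ x : E2, Mf (Real.exp (2*l) * Tf φ x))/(4*π) :=
    (div_le_div_iff_of_pos_right (by positivity)).mpr core
  have harith : ((∫ x : E2, Mf (Tf φ x)) + 2*l*(8*π*(∫ x : E2, k1 (Tf φ x))))/(4*π)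
      = (∫ x : E2, Mf (Tf φ x))/(4*π) + 4*l*(∫ x : E2, k1 (Tf φ x)) := by
    field_simp
    ring
  linarith

lemma gronwall {K : ℝ}
    (hstar : ∀ l : ℝ, 0 ≤ l → 2*Slf φ 0 - Ilf φ 0 + 4*l*K ≤ 2*Slf φ l - Ilf φ l)
    {l : ℝ} (hl : 0 ≤ l) :
    Slf φ l - Slf φ 0 ≤ (Ilf φ 0/2)*(Real.exp (2*l) - 1) - K*(Real.exp (2*l) - 1 - 2*l) := by
  set I0 := Ilf φ 0 with hI0def
  set W : ℝ → ℝ := fun s => Real.exp (-(2*s)) * (Slf φ s - Slf φ 0)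
      - ((I0/2)*(1 - Real.exp (-(2*s))) - K*(1 - (1+2*s)*Real.exp (-(2*s)))) with hWdef
  have hWd : ∀ s : ℝ, HasDerivAt W
      (Real.exp (-(2*s)) * (Ilf φ s - 2*(Slf φ s - Slf φ 0) - I0 + 4*K*s)) s := by
    intro s
    have hexpn : HasDerivAt (fun s : ℝ => Real.exp (-(2*s))) (Real.exp (-(2*s)) * (-2)) s := by
      simpa [neg_mul, mul_comm] using ((hasDerivAt_id' s).const_mul (-2:ℝ)).exp
    have h1 : HasDerivAt (fun s => Real.exp (-(2*s)) * (Slf φ s - Slf φ 0))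
        (Real.exp (-(2*s)) * (-2) * (Slf φ s - Slf φ 0) + Real.exp (-(2*s)) * Ilf φ s) s :=
      hexpn.mul ((Slf_deriv φ hφd hφexp s).sub_const _)
    have h2 : HasDerivAt (fun s : ℝ => (1 - Real.exp (-(2*s))) * (I0/2))
        ((0 - Real.exp (-(2*s)) * (-2)) * (I0/2)) s :=
      ((hasDerivAt_const s (1:ℝ)).sub hexpn).mul_const _
    have h3 : HasDerivAt (fun s : ℝ => (1+2*s)*Real.exp (-(2*s)))
        ((0+2*1)*Real.exp (-(2*s)) + (1+2*s)*(Real.exp (-(2*s)) * (-2))) s :=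
      ((hasDerivAt_const s (1:ℝ)).add ((hasDerivAt_id' s).const_mul 2)).mul hexpn
    have h4 : HasDerivAt (fun s : ℝ => K*(1 - (1+2*s)*Real.exp (-(2*s))))
        (K*(0 - ((0+2*1)*Real.exp (-(2*s)) + (1+2*s)*(Real.exp (-(2*s)) * (-2))))) s :=
      ((hasDerivAt_const s (1:ℝ)).sub h3).const_mul _
    have hfun : W = fun s : ℝ => Real.exp (-(2*s)) * (Slf φ s - Slf φ 0)
        - ((1 - Real.exp (-(2*s))) * (I0/2) - K*(1 - (1+2*s)*Real.exp (-(2*s)))) := by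
      funext s
      rw [hWdef]
      ring
    rw [hfun]
    exact (h1.sub (h2.sub h4)).congr_deriv (by ring)
  have hanti : AntitoneOn W (Set.Ici 0) := by
    refine antitoneOn_of_deriv_nonpos (convex_Ici 0)
      (fun s _ => ((hWd s).differentiableAt).continuousAt.continuousWithinAt)
      (fun s _ => ((hWd s).differentiableAt).differentiableWithinAt) ?_
    intro s hs
    rw [interior_Ici] at hs
    rw [(hWd s).deriv]
    have hst := hstar s hs.le
    have hb : Ilf φ s - 2*(Slf φ s - Slf φ 0) - I0 + 4*K*s ≤ 0 := by
      rw [hI0def]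
      linarith
    exact mul_nonpos_of_nonneg_of_nonpos (Real.exp_pos _).le hb
  have hW0 : W 0 = 0 := by
    rw [hWdef]
    norm_num
  have hWl : W l ≤ 0 := by
    have := hanti Set.self_mem_Ici (Set.mem_Ici.2 hl) hl
    rwa [hW0] at this
  rw [hWdef] at hWl
  simp only at hWl
  have hab : Real.exp (2*l) * Real.exp (-(2*l)) = 1 := by
    rw [← Real.exp_add]
    norm_num
  have h2 : Real.exp (2*l) * (Real.exp (-(2*l)) * (Slf φ l - Slf φ 0)
      - ((I0/2)*(1 - Real.exp (-(2*l))) - K*(1 - (1+2*l)*Real.exp (-(2*l))))) ≤ 0 :=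
    mul_nonpos_of_nonneg_of_nonpos (Real.exp_pos _).le hWl
  have h3 : Real.exp (2*l) * (Real.exp (-(2*l)) * (Slf φ l - Slf φ 0)) = Slf φ l - Slf φ 0 := by
    rw [← mul_assoc, hab, one_mul]
  have h4 : Real.exp (2*l) * ((I0/2)*(1 - Real.exp (-(2*l))) - K*(1 - (1+2*l)*Real.exp (-(2*l))))
      = (I0/2)*(Real.exp (2*l) - 1) - K*(Real.exp (2*l) - 1 - 2*l) := by
    linear_combination (K*(1+2*l) - I0/2) * hab
  have h5 : Slf φ l - Slf φ 0 - ((I0/2)*(Real.exp (2*l) - 1) - K*(Real.exp (2*l) - 1 - 2*l))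
      ≤ 0 := by
    calc Slf φ l - Slf φ 0 - ((I0/2)*(Real.exp (2*l) - 1) - K*(Real.exp (2*l) - 1 - 2*l))
        = Real.exp (2*l) * (Real.exp (-(2*l)) * (Slf φ l - Slf φ 0)
          - ((I0/2)*(1 - Real.exp (-(2*l))) - K*(1 - (1+2*l)*Real.exp (-(2*l))))) := by
          conv_rhs => rw [mul_sub]
          rw [h3, h4]
      _ ≤ 0 := h2
  linarith

end withhyp

lemma scale_Smu (hφd : Differentiable ℝ φ) (l : ℝ) :
    Smu 1 (scaleFn φ l) = Slf φ l := by
  simp only [Smu, Emu, Slf, JFf, Tf]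
  rw [scaleFn_gradSq φ l hφd, scaleFn_l2Sq φ l, scaleFn_int_Fmu φ l]
  ring

lemma scale_Imu (hφd : Differentiable ℝ φ) (l : ℝ) :
    Imu 1 (scaleFn φ l) = Ilf φ l := by
  simp only [Imu, Ilf, Jhf, Tf]
  rw [scaleFn_gradSq φ l hφd, scaleFn_int_nl φ l]

lemma scale_Pmu (l : ℝ) : Pmu 1 (scaleFn φ l) = Plf φ l := by
  simp only [Pmu, Plf, JFf, Tf]
  rw [scaleFn_l2Sq φ l, scaleFn_int_Fmu φ l]

lemma base_S : Smu 1 φ = Slf φ 0 := by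
  have hF0 : (∫ x : E2, Fmu 1 (φ x)) = (JFf φ 0) / (8*π) := by
    rw [JFf, ← integral_div]
    congr 1
    funext x
    rw [Fmu_eq_Ff]
    simp [Tf]
  simp only [Smu, Emu, Slf, mul_zero, neg_zero, Real.exp_zero, one_mul]
  rw [hF0]
  ring

lemma base_I : Imu 1 φ = Ilf φ 0 := by
  have h0 : (∫ x : E2, (nlDensity 1 (φ x) - 2 * Fmu 1 (φ x))) = (Jhf φ 0) / (4*π) := by
    rw [Jhf, ← integral_div]
    congr 1
    funext x
    rw [nl_eq_hf]
    simp [Tf]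
  simp only [Imu, Ilf, mul_zero, neg_zero, Real.exp_zero, one_mul]
  rw [h0]

lemma base_P : Pmu 1 φ = Plf φ 0 := by
  have hF0 : (∫ x : E2, Fmu 1 (φ x)) = (JFf φ 0) / (8*π) := by
    rw [JFf, ← integral_div]
    congr 1
    funext x
    rw [Fmu_eq_Ff]
    simp [Tf]
  simp only [Pmu, Plf, mul_zero, neg_zero, Real.exp_zero, one_mul]
  rw [hF0]

end CoercMain


set_option maxHeartbeats 1000000 in
/-- coercivity of `I₁` on `𝒜̄⁺₁`:
`I₁(φ) ≥ min{2(S₁(Q₁) - S₁(φ)), ∫ k₁(4π|φ|²)}`, together with the lower bounds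
`k₁(s) ≥ s³/(24π)` and `∫ k₁(4π|φ|²) ≥ (8π²/3)‖φ‖⁶_{L⁶}`. -/
theorem coercivity_on_Abar_plus
    (Q : E2 → ℂ) (hQ : IsGroundState 1 Q)
    (hPchar : IsLeast {s : ℝ | ∃ ψ : E2 → ℂ, MemH1 ψ ∧ ExpIntegrable ψ ∧
        ¬ ψ =ᵐ[volume] (0 : E2 → ℂ) ∧ Pmu 1 ψ = 0 ∧ s = Smu 1 ψ} (Smu 1 Q))
    (hIchar : IsLeast {s : ℝ | ∃ ψ : E2 → ℂ, MemH1 ψ ∧ ExpIntegrable ψ ∧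
        ¬ ψ =ᵐ[volume] (0 : E2 → ℂ) ∧ Imu 1 ψ = 0 ∧ s = Smu 1 ψ} (Smu 1 Q))
    (φ : E2 → ℂ) (hφmem : MemH1 φ) (hφexp : ExpIntegrable φ)
    (hS : Smu 1 φ < Smu 1 Q) (hP : 0 ≤ Pmu 1 φ) :
    min (2 * (Smu 1 Q - Smu 1 φ)) (∫ x : E2, k1 (4 * π * ‖φ x‖ ^ 2)) ≤ Imu 1 φ ∧
    (∀ s : ℝ, 0 ≤ s → s ^ 3 / (24 * π) ≤ k1 s) ∧
    (8 * π ^ 2 / 3) * (∫ x : E2, ‖φ x‖ ^ 6) ≤ ∫ x : E2, k1 (4 * π * ‖φ x‖ ^ 2) := by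
  classical
  have hπ := Real.pi_pos
  have hφd : Differentiable ℝ φ := hφmem.2.1
  open CoercAux CoercAux2 CoercScale CoercMain in
  have partB : ∀ s : ℝ, 0 ≤ s → s ^ 3 / (24 * π) ≤ k1 s := by
    intro s hs
    have h := CoercAux.K8_ge_cube hs
    have hk : k1 s = CoercAux.K8 s / (8*π) := by
      simp only [k1, CoercAux.K8]
      field_simp
      ring
    rw [hk, show s^3/(24*π) = (s^3/3)/(8*π) by ring]
    exact (div_le_div_iff_of_pos_right (by positivity)).mpr h
  refine ⟨?_, partB, ?_⟩
  · -- Part A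
    by_cases hz : φ =ᵐ[volume] (0 : E2 → ℂ)
    · -- degenerate case : φ vanishes identically
      have hall : ∀ x, φ x = 0 := by
        intro x
        by_contra hx
        have hU : IsOpen (φ ⁻¹' ({0}ᶜ : Set ℂ)) :=
          isOpen_compl_singleton.preimage hφd.continuous
        have hpos := hU.measure_pos volume ⟨x, hx⟩
        have h0 : volume {y : E2 | ¬ φ y = 0} = 0 := by
          have h := hz
          rw [Filter.EventuallyEq, MeasureTheory.ae_iff] at h
          simpa using h
        have : volume (φ ⁻¹' ({0}ᶜ : Set ℂ)) = 0 := h0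
        rw [this] at hpos
        exact lt_irrefl _ hpos
      have hφ0 : φ = fun _ => (0:ℂ) := funext hall
      subst hφ0
      have hI : Imu 1 (fun _ : E2 => (0:ℂ)) = 0 := by
        unfold Imu gradSq
        simp [nlDensity, Fmu]
      have hk0 : (∫ _ : E2, k1 (4*π*‖(0:ℂ)‖^2)) = 0 := by
        simp [k1]
      rw [hI]
      refine le_trans (min_le_right _ _) (le_of_eq ?_)
      simpa using hk0
    · -- nondegenerate case
      set K := ∫ x : E2, k1 (CoercMain.Tf φ x) with hKdef
      set I0 := CoercMain.Ilf φ 0 with hI0def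
      have hgoalK : (∫ x : E2, k1 (4*π*‖φ x‖^2)) = K := rfl
      clear_value K I0
      by_contra hcon
      push_neg at hcon
      rw [lt_min_iff] at hcon
      obtain ⟨hlt1, hlt2⟩ := hcon
      have hS0 : Smu 1 φ = CoercMain.Slf φ 0 := CoercMain.base_S φ
      have hI0 : Imu 1 φ = I0 := by rw [hI0def]; exact CoercMain.base_I φ
      have hP0 : Pmu 1 φ = CoercMain.Plf φ 0 := CoercMain.base_P φ
      have hstar : ∀ l : ℝ, 0 ≤ l →
          2*CoercMain.Slf φ 0 - CoercMain.Ilf φ 0 + 4*l*K ≤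
            2*CoercMain.Slf φ l - CoercMain.Ilf φ l := by
        rw [hKdef]
        exact fun l hl => CoercMain.star_int φ hφd hφexp hl
      have hgron : ∀ l : ℝ, 0 ≤ l → CoercMain.Slf φ l - CoercMain.Slf φ 0 ≤
          (I0/2)*(Real.exp (2*l) - 1) - K*(Real.exp (2*l) - 1 - 2*l) := by
        rw [hI0def]
        exact fun l hl => CoercMain.gronwall φ hφd hφexp hstar hl
      have hKnn : 0 ≤ K := by
        rw [hKdef]
        refine integral_nonneg (fun x => ?_)
        have h1 := CoercAux.K8_nonneg (CoercMain.Tf_nonneg φ x)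
        have hk : k1 (CoercMain.Tf φ x) = CoercAux.K8 (CoercMain.Tf φ x) / (8*π) := by
          simp only [k1, CoercAux.K8]
          field_simp
          ring
        rw [hk]
        positivity
      have hGnn : 0 ≤ gradSq φ := integral_nonneg (fun x => by positivity)
      have hPlf0 : 0 ≤ CoercMain.Plf φ 0 := hP0 ▸ hP
      have hSPdiff : ∀ l : ℝ, CoercMain.Slf φ l
          = Real.exp (2*l) * gradSq φ / 2 + CoercMain.Plf φ l := by
        intro l
        simp only [CoercMain.Slf, CoercMain.Plf]
        ring
      have hSlf0nn : 0 ≤ CoercMain.Slf φ 0 := by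
        rw [hSPdiff 0]
        exact add_nonneg (div_nonneg (mul_nonneg (Real.exp_pos _).le hGnn) (by norm_num)) hPlf0
      have hPlfleS : ∀ l, CoercMain.Plf φ l ≤ CoercMain.Slf φ l := by
        intro l
        rw [hSPdiff l]
        exact le_add_of_nonneg_left
          (div_nonneg (mul_nonneg (Real.exp_pos _).le hGnn) (by norm_num))
      have hlt1' : I0 < 2*(Smu 1 Q - CoercMain.Slf φ 0) := by
        rw [← hS0, ← hI0]
        exact hlt1
      have hlt2' : I0 < K := by
        rw [← hI0]
        rw [hgoalK] at hlt2
        exact hlt2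
      rcases lt_or_ge I0 0 with hneg | hnn
      · -- I0 < 0 : use the P characterization
        have hI0ne : I0 ≠ 0 := ne_of_lt hneg
        set c := 1 + (2*CoercMain.Slf φ 0 + 1)/(-I0) with hcdef
        have hc1 : 1 < c := by
          have : 0 < (2*CoercMain.Slf φ 0 + 1)/(-I0) := div_pos (by linarith) (by linarith)
          rw [hcdef]
          linarith
        clear_value c
        set Λ := Real.log c / 2 with hΛdef
        have hΛnn : 0 ≤ Λ := by
          rw [hΛdef]
          have := Real.log_nonneg hc1.le
          linarith
        clear_value Λ
        have hexpΛ : Real.exp (2*Λ) = c := by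
          rw [hΛdef, show 2*(Real.log c/2) = Real.log c by ring, Real.exp_log (by linarith)]
        have hD := hgron Λ hΛnn
        rw [hexpΛ] at hD
        have hterm : (I0/2)*(c - 1) = -(2*CoercMain.Slf φ 0 + 1)/2 := by
          rw [hcdef]
          field_simp
          ring
        have hcΛ : 0 ≤ c - 1 - 2*Λ := by
          have := Real.add_one_le_exp (2*Λ)
          rw [hexpΛ] at this
          linarith
        have hSΛ : CoercMain.Slf φ Λ ≤ -(1/2) := by
          have hKc := mul_nonneg hKnn hcΛ
          have h2S := hSlf0nn
          nlinarith [hD, hterm]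
        have hPΛ : CoercMain.Plf φ Λ < 0 := lt_of_le_of_lt (hPlfleS Λ) (by linarith)
        have hPcont := (CoercMain.Plf_cont φ hφd hφexp).continuousOn (s := Set.Icc 0 Λ)
        have hmem : (0:ℝ) ∈ Set.Icc (CoercMain.Plf φ Λ) (CoercMain.Plf φ 0) :=
          ⟨hPΛ.le, hPlf0⟩
        obtain ⟨l₁, hl₁mem, hl₁⟩ := intermediate_value_Icc' hΛnn hPcont hmem
        have hQle : Smu 1 Q ≤ CoercMain.Slf φ l₁ := by
          refine hPchar.2 ⟨CoercScale.scaleFn φ l₁, CoercScale.scaleFn_memH1 φ l₁ hφmem,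
            CoercScale.scaleFn_expIntegrable φ l₁ hφexp,
            CoercScale.scaleFn_nontrivial φ l₁ hz, ?_, (CoercMain.scale_Smu φ hφd l₁).symm⟩
          rw [CoercMain.scale_Pmu φ l₁]
          exact hl₁
        have hDl₁ := hgron l₁ hl₁mem.1
        have hexp1 : 1 ≤ Real.exp (2*l₁) := CoercAux.one_le_exp' (by linarith [hl₁mem.1])
        have h1 : (I0/2)*(Real.exp (2*l₁) - 1) ≤ 0 :=
          mul_nonpos_of_nonpos_of_nonneg (by linarith) (by linarith)
        have h2 : 0 ≤ K*(Real.exp (2*l₁) - 1 - 2*l₁) :=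
          mul_nonneg hKnn (by have := Real.add_one_le_exp (2*l₁); linarith)
        have hSl₁ : CoercMain.Slf φ l₁ ≤ CoercMain.Slf φ 0 := by linarith
        rw [hS0] at hS
        linarith
      · -- 0 ≤ I0 : use the I characterization
        have hKpos : 0 < K := lt_of_le_of_lt hnn hlt2'
        have hIl_half : CoercMain.Ilf φ (1/2 : ℝ) < 0 := by
          have hst := hstar (1/2) (by norm_num)
          have hgr := hgron (1/2) (by norm_num)
          have hee : Real.exp (2*((1:ℝ)/2)) = Real.exp 1 := by norm_num
          rw [hee] at hgr
          have he := Real.exp_one_gt_d9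
          nlinarith [hst, hgr]
        have hIcont := (CoercMain.Ilf_cont φ hφd hφexp).continuousOn
          (s := Set.Icc 0 (1/2 : ℝ))
        have hmem : (0:ℝ) ∈ Set.Icc (CoercMain.Ilf φ (1/2:ℝ)) (CoercMain.Ilf φ 0) :=
          ⟨hIl_half.le, by rw [← hI0def]; exact hnn⟩
        obtain ⟨l₀, hl₀mem, hl₀⟩ :=
          intermediate_value_Icc' (by norm_num : (0:ℝ) ≤ 1/2) hIcont hmem
        have hQle : Smu 1 Q ≤ CoercMain.Slf φ l₀ := by
          refine hIchar.2 ⟨CoercScale.scaleFn φ l₀, CoercScale.scaleFn_memH1 φ l₀ hφmem,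
            CoercScale.scaleFn_expIntegrable φ l₀ hφexp,
            CoercScale.scaleFn_nontrivial φ l₀ hz, ?_, (CoercMain.scale_Smu φ hφd l₀).symm⟩
          rw [CoercMain.scale_Imu φ hφd l₀]
          exact hl₀
        have hgr := hgron l₀ hl₀mem.1
        have hfac : 0 ≤ (Real.exp (2*l₀) - 1 - 2*l₀) * (K - I0/2) :=
          mul_nonneg (by have := Real.add_one_le_exp (2*l₀); linarith) (by linarith)
        have hbound : CoercMain.Slf φ l₀ ≤ CoercMain.Slf φ 0 + l₀ * I0 := by
          nlinarith [hgr, hfac]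
        have hhalf : l₀ * I0 ≤ (1/2) * I0 := mul_le_mul_of_nonneg_right hl₀mem.2 hnn
        linarith
  · -- Part C
    have hint1 : Integrable (fun x => k1 (CoercMain.Tf φ x)) :=
      CoercMain.int_k1 φ hφd hφexp
    have hg6 : Integrable (fun x : E2 => (8*π^2/3) * ‖φ x‖^6) := by
      have h := CoercAux2.integrable_comp_T (CoercMain.Tf_cont φ hφd)
        (CoercMain.Tf_nonneg φ) (CoercMain.Tf_int φ hφexp)
        (g := fun t => (8*π^2/3)*(t/(4*π))^3) (by fun_prop)
        (b := 1) (C := 1/(4*π)) one_pos ?_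
      · have heq : (fun x => (8*π^2/3)*((CoercMain.Tf φ x)/(4*π))^3)
            = fun x : E2 => (8*π^2/3) * ‖φ x‖^6 := by
          funext x
          simp only [CoercMain.Tf]
          rw [show 4*π*‖φ x‖^2/(4*π) = ‖φ x‖^2 by field_simp]
          ring
        rw [← heq]
        exact h
      · intro t ht
        have h1 := CoercAux.cube_le_exp ht
        show |(8*π^2/3)*(t/(4*π))^3| ≤ 1/(4*π) * (Real.exp (1*t) - 1)
        rw [one_mul, show (8*π^2/3)*(t/(4*π))^3 = t^3/(24*π) by field_simp; ring,
          abs_of_nonneg (by positivity : (0:ℝ) ≤ t^3/(24*π)),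
          show (1:ℝ)/(4*π)*(Real.exp t - 1) = 6*(Real.exp t - 1)/(24*π) by ring]
        exact (div_le_div_iff_of_pos_right (by positivity)).mpr h1
    rw [← MeasureTheory.integral_const_mul]
    refine integral_mono hg6 hint1 (fun x => ?_)
    have h := partB (4*π*‖φ x‖^2) (by positivity)
    calc (8*π^2/3)*‖φ x‖^6 = (4*π*‖φ x‖^2)^3/(24*π) := by
          field_simp
          ring
      _ ≤ k1 (4*π*‖φ x‖^2) := h
end
end
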